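/- arXiv:1706.03669 — 2 statements merged into one kernel-verified Lean document; each statement's English description precedes it below -/
import Mathlib

section
/- For every t ≥ 0, every compact subset K ⊂ S and every δ > 0, the map x ↦ ω'_{t,K,x}(δ) from D_loc(S) (with the local Skorokhod topology) to [0,∞] is upper semi-continuous. -/
open Filter Topology Set MeasureTheory
open scoped ENNReal NNReal

noncomputable section

namespace LocSkor

/-- Paths with values in the one-point compactification. -/
abbrev Path (S : Type*) := ℝ → OnePoint S

variable {S : Type*} [TopologicalSpace S]

/-- Distance between two points of `S^Δ`, with junk value `0` if one of them is `Δ`. -/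
noncomputable def dd (ρ : S → S → ℝ) : OnePoint S → OnePoint S → ℝ :=
  fun a b => Option.elim (show Option S from a) 0
    (fun a' => Option.elim (show Option S from b) 0 (fun b' => ρ a' b'))

/-- The set of times at which the path has already exploded. -/
def xiSet (x : Path S) : Set ℝ := {t : ℝ | x t = OnePoint.infty}

/-- The path explodes in finite time, i.e. `ξ(x) < ∞`. -/
def explodes (x : Path S) : Prop := (xiSet x).Nonempty

/-- The (real-valued) explosion time `ξ(x)`; junk value `0` if the path never explodes. -/
def xiR (x : Path S) : ℝ := sInf (xiSet x)

/-- The `[0,∞]`-valued explosion time `ξ(x)`. -/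
def xiE (x : Path S) : ℝ≥0∞ := ⨅ t ∈ xiSet x, ENNReal.ofReal t

/-- The range `{x_s, 0 ≤ s < ξ(x)}` of the path, as a subset of `S`. -/
def pathRange (x : Path S) : Set S := {a : S | ∃ s : ℝ, 0 ≤ s ∧ x s = (a : OnePoint S)}

/-- `x` is an exploding cadlag path: `x_t = Δ` exactly for `t ≥ ξ(x)` (and we normalize
`x` on negative times), `x` is right-continuous before explosion, and has left limits in `S`
at every point of `(0, ξ(x))`. -/
def IsDexp (x : Path S) : Prop :=
  (∀ t ≤ (0:ℝ), x t = x 0) ∧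
  (∀ ⦃s t : ℝ⦄, s ≤ t → x s = OnePoint.infty → x t = OnePoint.infty) ∧
  IsClosed (xiSet x) ∧
  (∀ t : ℝ, 0 ≤ t → x t ≠ OnePoint.infty → Tendsto x (𝓝[>] t) (𝓝 (x t))) ∧
  (∀ t : ℝ, 0 < t → x t ≠ OnePoint.infty →
    ∃ a : S, Tendsto x (𝓝[<] t) (𝓝 (a : OnePoint S)))

/-- `x` belongs to the local cadlag space `𝔻_loc(S)`. -/
def IsDloc (x : Path S) : Prop :=
  IsDexp x ∧
  ((explodes x ∧ 0 < xiR x ∧ IsCompact (closure (pathRange x))) →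
    ∃ a : S, Tendsto x (𝓝[<] xiR x) (𝓝 (a : OnePoint S)))

/-- `x` belongs to the global cadlag space `𝔻(S)`, i.e. `ξ(x) = ∞`. -/
def IsDglob (x : Path S) : Prop := IsDexp x ∧ ∀ t : ℝ, x t ≠ OnePoint.infty

/-- `x` is a cadlag path with values in the compact space `S^Δ`, i.e. `x ∈ 𝔻(S^Δ)`. -/
def IsCadlagDelta (x : Path S) : Prop :=
  (∀ t ≤ (0:ℝ), x t = x 0) ∧
  (∀ t : ℝ, 0 ≤ t → Tendsto x (𝓝[>] t) (𝓝 (x t))) ∧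
  (∀ t : ℝ, 0 < t → ∃ a : OnePoint S, Tendsto x (𝓝[<] t) (𝓝 a))

/-- The space `𝔻_exp(S)` of exploding cadlag paths. -/
def DexpT (S : Type*) [TopologicalSpace S] : Type _ := {x : Path S // IsDexp x}

/-- The space `𝔻_loc(S)`. -/
def DlocT (S : Type*) [TopologicalSpace S] : Type _ := {x : Path S // IsDloc x}

/-- The space `𝔻(S)`. -/
def DglobT (S : Type*) [TopologicalSpace S] : Type _ := {x : Path S // IsDglob x}

/-- The space `𝔻(S^Δ)`. -/
def DDeltaT (S : Type*) [TopologicalSpace S] : Type _ := {x : Path S // IsCadlagDelta x}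

/-! ### Time changes `Λ̃` and `Λ` -/

/-- `l` is an increasing bijection of `ℝ₊` (extended by the identity on negative reals):
the class `Λ̃`. -/
def IsTimeBij (l : ℝ → ℝ) : Prop :=
  StrictMono l ∧ Function.Surjective l ∧ ∀ t ≤ (0:ℝ), l t = t

/-- `‖log λ̇‖_t ≤ ε`, expressed through slopes. -/
def LogSlopeLe (l : ℝ → ℝ) (t ε : ℝ) : Prop :=
  ∀ s₁ s₂ : ℝ, 0 ≤ s₁ → s₁ < s₂ → s₂ ≤ t → |Real.log ((l s₂ - l s₁) / (s₂ - s₁))| ≤ ε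

/-- `‖λ - id‖_t ≤ ε`. -/
def IdDistLe (l : ℝ → ℝ) (t ε : ℝ) : Prop := ∀ s : ℝ, 0 ≤ s → s ≤ t → |l s - s| ≤ ε

/-- `l` belongs to the class `Λ` of increasing bijections of `ℝ₊` which are locally
Lipschitz together with their inverses (equivalently, `‖log λ̇‖_t < ∞` for all `t`). -/
def IsLipTimeBij (l : ℝ → ℝ) : Prop :=
  IsTimeBij l ∧ ∀ t : ℝ, 0 < t → ∃ C : ℝ, LogSlopeLe l t C

/-- `ξ(x) < ∞` together with the relative compactness in `S` of `{x_s, s < ξ(x)}`. -/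
def Case1 (x : Path S) : Prop := explodes x ∧ IsCompact (closure (pathRange x))

/-- Convergence criterion of Theorem 2.6, parametrized by the class of time changes and
by the norm used on them. -/
def ConvGen (ρ : S → S → ℝ) (Lam : (ℝ → ℝ) → Prop) (Nrm : (ℝ → ℝ) → ℝ → ℝ → Prop)
    (xk : ℕ → Path S) (x : Path S) : Prop :=
  ∃ l : ℕ → ℝ → ℝ, (∀ k, Lam (l k)) ∧
    (Case1 x →
      ((∀ᶠ k in atTop, ∀ s : ℝ, 0 ≤ s → s < l k (xiR x) → xk k s ≠ OnePoint.infty) ∧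
      (∀ ε > (0:ℝ), ∀ᶠ k in atTop, ∀ s : ℝ, 0 ≤ s → s < xiR x →
        dd ρ (x s) (xk k (l k s)) ≤ ε) ∧
      Tendsto (fun k => xk k (l k (xiR x))) atTop (𝓝 (OnePoint.infty : OnePoint S)) ∧
      (∀ ε > (0:ℝ), ∀ᶠ k in atTop, Nrm (l k) (xiR x) ε))) ∧
    (¬ Case1 x →
      ∀ t : ℝ, 0 ≤ t → x t ≠ OnePoint.infty →
        ((∀ᶠ k in atTop, xk k (l k t) ≠ OnePoint.infty) ∧
        (∀ ε > (0:ℝ), ∀ᶠ k in atTop, ∀ s : ℝ, 0 ≤ s → s ≤ t →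
          dd ρ (x s) (xk k (l k s)) ≤ ε) ∧
        (∀ ε > (0:ℝ), ∀ᶠ k in atTop, Nrm (l k) t ε)))

/-- Convergence criterion of Theorem 2.6 (with `Λ` and `‖log λ̇‖`). -/
def ConvLoc (ρ : S → S → ℝ) (xk : ℕ → Path S) (x : Path S) : Prop :=
  ConvGen ρ IsLipTimeBij LogSlopeLe xk x

/-- Convergence criterion of Theorem 2.7 (with `Λ̃` and `‖λ - id‖`). -/
def ConvLocTilde (ρ : S → S → ℝ) (xk : ℕ → Path S) (x : Path S) : Prop :=
  ConvGen ρ IsTimeBij IdDistLe xk x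

/-! ### σ-algebras -/

/-- The Borel σ-algebra of `S^Δ`. -/
def msOP (S : Type*) [TopologicalSpace S] : MeasurableSpace (OnePoint S) := borel _

/-- The σ-algebra `𝓕_t = σ(X_s, 0 ≤ s ≤ t)`. -/
def filt {α : Type*} (ev : α → Path S) (t : ℝ) : MeasurableSpace α :=
  ⨆ s ∈ Icc (0:ℝ) t, MeasurableSpace.comap (fun x => ev x s) (msOP S)

/-- The σ-algebra `𝓕_{t-} = σ(X_s, 0 ≤ s < t)`. -/
def filtLt {α : Type*} (ev : α → Path S) (t : ℝ) : MeasurableSpace α :=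
  ⨆ s ∈ Ico (0:ℝ) t, MeasurableSpace.comap (fun x => ev x s) (msOP S)

/-- The σ-algebra `𝓕 = σ(X_s, 0 ≤ s < ∞)`. -/
def filtAll {α : Type*} (ev : α → Path S) : MeasurableSpace α :=
  ⨆ s ∈ Ici (0:ℝ), MeasurableSpace.comap (fun x => ev x s) (msOP S)

/-- The σ-algebra `𝓕_{t+} = ⋂_{s>t} 𝓕_s`. -/
def filtPlus {α : Type*} (ev : α → Path S) (t : ℝ) : MeasurableSpace α :=
  ⨅ s ∈ Ioi t, filt ev s

/-- `τ` is an `(𝓕_t)`-stopping time. -/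
def IsStopping {α : Type*} (ev : α → Path S) (τ : α → ℝ≥0∞) : Prop :=
  ∀ t : ℝ, 0 ≤ t → MeasurableSet[filt ev t] {x | τ x ≤ ENNReal.ofReal t}

open Classical in
/-- Evaluation of a path at a `[0,∞]`-valued time (`Δ` at time `∞`). -/
def evalE (x : Path S) (t : ℝ≥0∞) : OnePoint S :=
  if t = ⊤ then OnePoint.infty else x t.toReal

open Classical in
/-- The left limit `x_{t-}`, junk value `Δ` if it does not exist. -/
def leftLimVal (x : Path S) (t : ℝ) : OnePoint S :=
  if h : ∃ a : OnePoint S, Tendsto x (𝓝[<] t) (𝓝 a) then h.choose else OnePoint.infty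

/-- The exit time `τ^U = inf {t ≥ 0 | X_{t-} ∉ U or X_t ∉ U}`. -/
def tauU (U : Set S) (x : Path S) : ℝ≥0∞ :=
  ⨅ t ∈ {t : ℝ | 0 ≤ t ∧
      ((0 < t ∧ ¬ ∃ a ∈ U, Tendsto x (𝓝[<] t) (𝓝 (a : OnePoint S))) ∨
        ¬ ∃ a ∈ U, x t = (a : OnePoint S))},
    ENNReal.ofReal t

/-! ### The modulus `ω'` -/

/-- The modulus of continuity `ω'_{t,K,x}(δ)` of (2.5), with values in `[0,∞]`. -/
def omegaMod (ρ : S → S → ℝ) (t : ℝ) (K : Set S) (x : Path S) (δ : ℝ) : ℝ≥0∞ :=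
  ⨅ (p : ℕ × (ℕ → ℝ)) (_ : p.2 0 = 0 ∧ (∀ i < p.1, p.2 i + δ < p.2 (i + 1)) ∧
      (∀ s : ℝ, 0 ≤ s → s < p.2 p.1 → x s ≠ OnePoint.infty) ∧
      ¬ (p.2 p.1 ≤ t ∧ ∃ a ∈ K, x (p.2 p.1) = (a : OnePoint S))),
    ⨆ (i : ℕ) (_ : i < p.1) (s₁ : ℝ) (_ : p.2 i ≤ s₁ ∧ s₁ < p.2 (i + 1))
      (s₂ : ℝ) (_ : p.2 i ≤ s₂ ∧ s₂ < p.2 (i + 1)),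
      ENNReal.ofReal (dd ρ (x s₁) (x s₂))

/-! ### Skorokhod pseudo-metrics -/

open Classical in
/-- The penalty term `d(x_{t₁}, K^c) ∧ (t - t₁)_+ 𝟙_{t₁ < ξ(x)}` appearing in the
definition of the pseudo-metrics (with the convention `d(a, ∅) = +∞`). -/
noncomputable def pen (ρ : S → S → ℝ) (t : ℝ) (K : Set S) (x : Path S) (t₁ : ℝ) : ℝ :=
  Option.elim (show Option S from x t₁) 0 (fun a =>
    if (Kᶜ : Set S).Nonempty then min (sInf ((fun b => ρ a b) '' (Kᶜ : Set S))) (max (t - t₁) 0)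
    else max (t - t₁) 0)

open Classical in
/-- The set of admissible bounds in the definition of `ρ̃_{t,K}` (`useLip = false`) and of
`ρ_{t,K}` (`useLip = true`). -/
def rhoSet (useLip : Bool) (ρ : S → S → ℝ) (t : ℝ) (K : Set S) (x y : Path S) : Set ℝ :=
  {r : ℝ | 0 ≤ r ∧ ∃ t₁ t₂ : ℝ, ∃ l : ℝ → ℝ, 0 ≤ t₁ ∧ 0 ≤ t₂ ∧ l t₁ = t₂ ∧
    (if useLip then IsLipTimeBij l else IsTimeBij l) ∧
    (∀ s : ℝ, 0 ≤ s → s < t₁ → x s ≠ OnePoint.infty) ∧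
    (∀ s : ℝ, 0 ≤ s → s < t₂ → y s ≠ OnePoint.infty) ∧
    (∀ s : ℝ, 0 ≤ s → s < t₁ → dd ρ (x s) (y (l s)) ≤ r) ∧
    IdDistLe l t₁ r ∧
    (useLip = true → LogSlopeLe l t₁ r) ∧
    pen ρ t K x t₁ ≤ r ∧ pen ρ t K y t₂ ≤ r}

/-- The pseudo-metric `ρ̃_{t,K}`. -/
noncomputable def rhoTilde (ρ : S → S → ℝ) (t : ℝ) (K : Set S) (x y : Path S) : ℝ :=
  sInf (rhoSet false ρ t K x y)

/-- The pseudo-metric `ρ_{t,K}`. -/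
noncomputable def rhoMet (ρ : S → S → ℝ) (t : ℝ) (K : Set S) (x y : Path S) : ℝ :=
  sInf (rhoSet true ρ t K x y)

/-! ### Time change -/

/-- `g ∈ C^{≠0}(S, ℝ₊)`: `{g = 0}` is closed and `g` is continuous on `{g ≠ 0}`. -/
def Czero (g : S → ℝ) : Prop :=
  (∀ a : S, 0 ≤ g a) ∧ IsClosed {a : S | g a = 0} ∧ ContinuousOn g {a : S | g a ≠ 0}

/-- `g ∈ C̃^{≠0}(S, ℝ₊)`: moreover `g` is bounded on every compact subset of `S`. -/
def CzeroLocBdd (g : S → ℝ) : Prop :=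
  Czero g ∧ ∀ K : Set S, IsCompact K → ∃ C : ℝ, ∀ a ∈ K, g a ≤ C

/-- `g` extended to `S^Δ` by the junk value `0` at `Δ`. -/
def gOP (g : S → ℝ) : OnePoint S → ℝ := fun a => Option.elim (show Option S from a) 0 g

open Classical in
/-- The additive functional `A^g_t(x) = ∫_0^t du / g(x_u)` for `t ∈ [0, τ^{{g≠0}}(x)]`,
and `+∞` otherwise. -/
noncomputable def Ag (g : S → ℝ) (x : Path S) (t : ℝ) : ℝ≥0∞ :=
  if 0 ≤ t ∧ ENNReal.ofReal t ≤ tauU {a : S | g a ≠ 0} x then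
    ∫⁻ u in Ioo (0:ℝ) t, (ENNReal.ofReal (gOP g (x u)))⁻¹
  else ⊤

/-- The time change `τ^g_t(x) = inf {s ≥ 0 | A^g_s(x) ≥ t}`, for `t ∈ [0,∞]`. -/
noncomputable def taug (g : S → ℝ) (x : Path S) (t : ℝ≥0∞) : ℝ≥0∞ :=
  ⨅ s ∈ {s : ℝ | 0 ≤ s ∧ t ≤ Ag g x s}, ENNReal.ofReal s

/-- The total mass `A^g_{τ^g_∞(x)}(x) = ∫_0^{τ^{{g≠0}}(x)} du / g(x_u)`. -/
noncomputable def Atotal (g : S → ℝ) (x : Path S) : ℝ≥0∞ :=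
  ∫⁻ u in {u : ℝ | 0 < u ∧ ENNReal.ofReal u ≤ tauU {a : S | g a ≠ 0} x},
    (ENNReal.ofReal (gOP g (x u)))⁻¹

/-- The filter of times converging to `t ∈ [0,∞]` from the left. -/
noncomputable def leftFilter (t : ℝ≥0∞) : Filter ℝ := if t = ⊤ then atTop else 𝓝[<] t.toReal

open Classical in
/-- The left limit `x_{t-}` at a `[0,∞]`-valued time, junk value `Δ` if it does not exist. -/
noncomputable def leftLimValE (x : Path S) (t : ℝ≥0∞) : OnePoint S :=
  if h : ∃ a : OnePoint S, Tendsto x (leftFilter t) (𝓝 a) then h.choose else OnePoint.infty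

open Classical in
/-- The time-changed path `g·x` of Definition 3.1.  -/
noncomputable def timeChange (g : S → ℝ) (x : Path S) : Path S := fun t =>
  if 0 ≤ t ∧ Atotal g x ≤ ENNReal.ofReal t ∧
      ∃ a : S, g a = 0 ∧ Tendsto x (leftFilter (tauU {b : S | g b ≠ 0} x)) (𝓝 (a : OnePoint S))
  then leftLimValE x (tauU {b : S | g b ≠ 0} x)
  else evalE x (taug g x (ENNReal.ofReal t))

/-- The constant path equal to `Δ`. -/
def deadPath (S : Type*) [TopologicalSpace S] : Path S := fun _ => OnePoint.infty

lemma isDexp_deadPath : IsDexp (deadPath S) := by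
  refine ⟨fun _ _ => rfl, fun _ _ _ _ => rfl, ?_, ?_, ?_⟩
  · have : xiSet (deadPath S) = univ := by ext t; simp [xiSet, deadPath]
    rw [this]; exact isClosed_univ
  · intro t _ h; exact absurd rfl h
  · intro t _ h; exact absurd rfl h

lemma isDloc_deadPath : IsDloc (deadPath S) := by
  refine ⟨isDexp_deadPath, ?_⟩
  rintro ⟨-, hxi, -⟩
  exfalso
  have huniv : xiSet (deadPath S) = univ := by ext t; simp [xiSet, deadPath]
  have : xiR (deadPath S) = 0 := by
    rw [xiR, huniv]
    exact Real.sInf_of_not_bddBelow (by simp [not_bddBelow_univ (α := ℝ)])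
  rw [this] at hxi; exact lt_irrefl 0 hxi

lemma isCadlagDelta_deadPath : IsCadlagDelta (deadPath S) :=
  ⟨fun _ _ => rfl, fun _ _ => tendsto_const_nhds, fun _ _ => ⟨OnePoint.infty, tendsto_const_nhds⟩⟩

open Classical in
/-- Packaging of a raw path as an element of `𝔻_loc(S)` (junk value if it is not one). -/
noncomputable def toDloc (y : Path S) : DlocT S :=
  if h : IsDloc y then ⟨y, h⟩ else ⟨deadPath S, isDloc_deadPath⟩

open Classical in
/-- Packaging of a raw path as an element of `𝔻(S^Δ)` (junk value if it is not one). -/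
noncomputable def toDDelta (y : Path S) : DDeltaT S :=
  if h : IsCadlagDelta y then ⟨y, h⟩ else ⟨deadPath S, isCadlagDelta_deadPath⟩

/-- Condition defining the continuity set `B` of Theorem 3.3, for a pair `(g, x)`. -/
def BCond (g : S → ℝ) (x : Path S) : Prop :=
  (tauU {a : S | g a ≠ 0} x < xiE x →
    ∀ t : ℝ, tauU {a : S | g a ≠ 0} x < ENNReal.ofReal t →
      ∫⁻ u in Ioo (0:ℝ) t, (ENNReal.ofReal (gOP g (x u)))⁻¹ = ⊤) ∧
  (Atotal g x < ⊤ →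
    ∀ a : S, tauU {a : S | g a ≠ 0} x ≠ ⊤ →
      Tendsto x (𝓝[<] (tauU {a : S | g a ≠ 0} x).toReal) (𝓝 (a : OnePoint S)) →
      g a = 0 → x ((tauU {a : S | g a ≠ 0} x).toReal) = (a : OnePoint S))

/-- `x_{ξ(x)-}` exists in `U` whenever `0 < ξ(x) < ∞`. -/
def limExistsIn (U : Set S) (y : Path S) : Prop :=
  (explodes y ∧ 0 < xiR y) → ∃ a ∈ U, Tendsto y (𝓝[<] xiR y) (𝓝 (a : OnePoint S))

/-! ### Global Skorokhod convergence -/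

/-- Convergence in the global Skorokhod topology of `𝔻(S)` (Corollary 2.7). -/
def ConvGlob (ρ : S → S → ℝ) (xk : ℕ → Path S) (x : Path S) : Prop :=
  ∃ l : ℕ → ℝ → ℝ, (∀ k, IsLipTimeBij (l k)) ∧ ∀ t : ℝ, 0 ≤ t →
    (∀ ε > (0:ℝ), ∀ᶠ k in atTop, ∀ s : ℝ, 0 ≤ s → s ≤ t → dd ρ (x s) (xk k (l k s)) ≤ ε) ∧
    (∀ ε > (0:ℝ), ∀ᶠ k in atTop, LogSlopeLe (l k) t ε)

/-- Convergence in the global Skorokhod topology of `𝔻(S^Δ)`, written with entourages of the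
(unique) uniformity of the compact space `S^Δ` (equivalently, with any compatible metric). -/
def ConvGlobDelta (xk : ℕ → Path S) (x : Path S) : Prop :=
  ∃ l : ℕ → ℝ → ℝ, (∀ k, IsTimeBij (l k)) ∧ ∀ t : ℝ, 0 ≤ t →
    (∀ V ∈ 𝓝ˢ (Set.diagonal (OnePoint S)), ∀ᶠ k in atTop,
      ∀ s : ℝ, 0 ≤ s → s ≤ t → ((x s, xk k (l k s)) : OnePoint S × OnePoint S) ∈ V) ∧
    (∀ ε > (0:ℝ), ∀ᶠ k in atTop, IdDistLe (l k) t ε)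

/-! ### Markov families -/

/-- The shifted path `(X_{t₀+t})_{t≥0}`, at a `[0,∞]`-valued time `t₀`. -/
noncomputable def shiftE (x : Path S) (t₀ : ℝ≥0∞) : Path S := fun t =>
  if t₀ = ⊤ then OnePoint.infty else x (t₀.toReal + max t 0)

/-- Conditions a), b) in the definition of a Markov family (together with the
normalisation `P_Δ(ξ = 0) = 1`). -/
def MarkovBase {α : Type*} (ev : α → Path S)
    (P : OnePoint S → @Measure α (filtAll ev)) : Prop :=
  (∀ a : OnePoint S, @IsProbabilityMeasure α (filtAll ev) (P a)) ∧
  (∀ B : Set α, MeasurableSet[filtAll ev] B →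
    @Measurable S ℝ≥0∞ (borel S) inferInstance (fun a : S => P (a : OnePoint S) B)) ∧
  (∀ a : S, P (a : OnePoint S) {x | ev x 0 = (a : OnePoint S)} = 1) ∧
  (P OnePoint.infty {x | ev x 0 = OnePoint.infty} = 1)

/-- Condition c) in the definition of a `(𝓖_t)`-Markov family. -/
def MarkovProp {α : Type*} (ev : α → Path S) (G : ℝ → MeasurableSpace α)
    (P : OnePoint S → @Measure α (filtAll ev)) : Prop :=
  ∀ (a : OnePoint S) (t₀ : ℝ), 0 ≤ t₀ →
    ∀ B : Set (Path S), MeasurableSet[filtAll (id : Path S → Path S)] B →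
      ∀ A : Set α, MeasurableSet[G t₀] A →
        P a (A ∩ {x | (fun t => ev x (t₀ + max t 0)) ∈ B}) =
          ∫⁻ x in A, P (ev x t₀) {y | ev y ∈ B} ∂(P a)

/-- Condition c) for a `(𝓖_t)`-strong Markov family: the Markov property at every
`(𝓖_t)`-stopping time. -/
def StrongMarkovProp {α : Type*} (ev : α → Path S) (G : ℝ → MeasurableSpace α)
    (P : OnePoint S → @Measure α (filtAll ev)) : Prop :=
  ∀ (a : OnePoint S) (τ : α → ℝ≥0∞),
    (∀ t : ℝ, 0 ≤ t → MeasurableSet[G t] {x | τ x ≤ ENNReal.ofReal t}) →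
    ∀ B : Set (Path S), MeasurableSet[filtAll (id : Path S → Path S)] B →
      ∀ A : Set α, MeasurableSet[filtAll ev] A →
        (∀ t : ℝ, 0 ≤ t → MeasurableSet[G t] (A ∩ {x | τ x ≤ ENNReal.ofReal t})) →
        P a (A ∩ {x | shiftE (ev x) (τ x) ∈ B}) =
          ∫⁻ x in A, P (evalE (ev x) (τ x)) {y | ev y ∈ B} ∂(P a)

section Aux

set_option linter.unusedSectionVars false
variable {X : Type*} [MetricSpace X]

lemma dd_coe (ρ : X → X → ℝ) (a b : X) :
    dd ρ (a : OnePoint X) (b : OnePoint X) = ρ a b := rfl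

lemma exists_some_of_ne_infty {z : OnePoint X} (h : z ≠ OnePoint.infty) :
    ∃ a : X, z = (a : OnePoint X) := by
  cases z with
  | infty => exact absurd rfl h
  | coe a => exact ⟨a, rfl⟩

lemma dd_dist_nonneg (a b : OnePoint X) : 0 ≤ dd dist a b := by
  cases a with
  | infty => exact le_rfl
  | coe a' =>
    cases b with
    | infty => exact le_rfl
    | coe b' => exact dist_nonneg

lemma IsTimeBij.zero' {l : ℝ → ℝ} (h : IsTimeBij l) : l 0 = 0 := h.2.2 0 le_rfl

lemma logSlopeLe_mono {l : ℝ → ℝ} {T T' ε : ℝ} (h : LogSlopeLe l T ε) (hT : T' ≤ T) :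
    LogSlopeLe l T' ε := fun s₁ s₂ h1 h2 h3 => h s₁ s₂ h1 h2 (h3.trans hT)

lemma slope_lb {l : ℝ → ℝ} (hl : StrictMono l) {T ε s₁ s₂ : ℝ} (h : LogSlopeLe l T ε)
    (h1 : 0 ≤ s₁) (h2 : s₁ < s₂) (h3 : s₂ ≤ T) :
    Real.exp (-ε) * (s₂ - s₁) ≤ l s₂ - l s₁ := by
  have hd : 0 < s₂ - s₁ := sub_pos.mpr h2
  have hn : 0 < l s₂ - l s₁ := sub_pos.mpr (hl h2)
  have hr : 0 < (l s₂ - l s₁) / (s₂ - s₁) := div_pos hn hd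
  have habs := h s₁ s₂ h1 h2 h3
  have hlog : -ε ≤ Real.log ((l s₂ - l s₁) / (s₂ - s₁)) := (abs_le.mp habs).1
  have hexp := Real.exp_le_exp.mpr hlog
  rw [Real.exp_log hr] at hexp
  calc Real.exp (-ε) * (s₂ - s₁) ≤ (l s₂ - l s₁) / (s₂ - s₁) * (s₂ - s₁) :=
        mul_le_mul_of_nonneg_right hexp hd.le
    _ = l s₂ - l s₁ := div_mul_cancel₀ _ hd.ne'

lemma mono_of_gaps {v : ℕ → ℝ} {N : ℕ} (h : ∀ i < N, v i < v (i + 1)) :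
    ∀ i j : ℕ, i ≤ j → j ≤ N → v i ≤ v j := by
  intro i j hij hjN
  induction j, hij using Nat.le_induction with
  | base => exact le_rfl
  | succ n hn ih =>
    exact le_trans (ih (le_trans (Nat.le_succ n) hjN)) (h n (Nat.lt_of_succ_le hjN)).le

lemma lt_xiR {x : Path X} (hx : IsDexp x) (hex : explodes x) {r : ℝ} (hr : 0 ≤ r)
    (h : x r ≠ OnePoint.infty) : r < xiR x := by
  have hsub : xiSet x ⊆ Set.Ioi r := fun s hs => lt_of_not_ge fun hsr => h (hx.2.1 hsr hs)
  have hbdd : BddBelow (xiSet x) := ⟨r, fun s hs => (hsub hs).le⟩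
  exact hsub (hx.2.2.1.csInf_mem hex hbdd)

lemma xiR_eq {x : Path X} (hx : IsDexp x) {r : ℝ} (hr : 0 < r)
    (hne : ∀ s, 0 ≤ s → s < r → x s ≠ OnePoint.infty) (h : x r = OnePoint.infty) :
    xiR x = r := by
  have hlb : ∀ s ∈ xiSet x, r ≤ s := by
    intro s hs
    by_contra hsr
    push_neg at hsr
    rcases le_or_gt 0 s with h0 | h0
    · exact hne s h0 hsr hs
    · exact hne 0 le_rfl hr (hx.2.1 h0.le hs)
  exact le_antisymm (csInf_le ⟨r, hlb⟩ h) (le_csInf ⟨r, h⟩ hlb)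

end Aux
section Aux2
set_option linter.unusedSectionVars false
set_option maxHeartbeats 1000000
variable {X : Type*} [MetricSpace X]

lemma exists_compact_range {x : Path X} (hx : IsDexp x) {b : ℝ} (hb : 0 ≤ b)
    (h : ∀ s, 0 ≤ s → s ≤ b → x s ≠ OnePoint.infty) :
    ∃ C : Set X, IsCompact C ∧ ∀ s, 0 ≤ s → s ≤ b → ∃ a ∈ C, x s = (a : OnePoint X) := by
  classical
  obtain ⟨a₀, _⟩ := exists_some_of_ne_infty (h 0 le_rfl hb)
  set a : ℝ → X := fun s => if hs : ∃ c : X, x s = (c : OnePoint X) then hs.choose else a₀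
    with hadef
  have hxa : ∀ s, 0 ≤ s → s ≤ b → x s = (a s : OnePoint X) := by
    intro s h1 h2
    obtain ⟨c, hc⟩ := exists_some_of_ne_infty (h s h1 h2)
    have he : ∃ c : X, x s = (c : OnePoint X) := ⟨c, hc⟩
    simp only [hadef, dif_pos he]
    exact he.choose_spec
  have hemb := (OnePoint.isOpenEmbedding_coe (X := X)).isEmbedding
  have key : ∀ g : ℕ → ℝ, (∀ n, g n ∈ Set.Icc (0:ℝ) b) →
      ∃ p : X, ∃ φ : ℕ → ℕ, StrictMono φ ∧
        Filter.Tendsto (fun n => a (g (φ n))) Filter.atTop (nhds p) := by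
    intro g hg
    obtain ⟨r, hr, ψ, hψ, hgψ⟩ := (isCompact_Icc (a := (0:ℝ)) (b := b)).tendsto_subseq hg
    have hxr : x r ≠ OnePoint.infty := h r hr.1 hr.2
    by_cases hfr : ∃ᶠ n in Filter.atTop, g (ψ n) = r
    · obtain ⟨φ', hφ', hconst⟩ := Filter.extraction_of_frequently_atTop hfr
      refine ⟨a r, ψ ∘ φ', hψ.comp hφ', ?_⟩
      exact tendsto_const_nhds.congr fun n => (congrArg a (hconst n)).symm
    · by_cases hfg : ∃ᶠ n in Filter.atTop, r < g (ψ n)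
      · obtain ⟨φ', hφ', hgt⟩ := Filter.extraction_of_frequently_atTop hfg
        have hrc := hx.2.2.2.1 r hr.1 hxr
        have ht1 : Filter.Tendsto (fun n => g (ψ (φ' n))) Filter.atTop (nhdsWithin r (Set.Ioi r)) :=
          tendsto_nhdsWithin_of_tendsto_nhds_of_eventually_within _
            (hgψ.comp hφ'.tendsto_atTop) (Filter.Eventually.of_forall fun n => hgt n)
        have ht2 : Filter.Tendsto (fun n => x (g (ψ (φ' n)))) Filter.atTop (nhds (x r)) :=
          hrc.comp ht1
        refine ⟨a r, ψ ∘ φ', hψ.comp hφ', ?_⟩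
        rw [hemb.tendsto_nhds_iff]
        have hlim : (x r) = ((a r : X) : OnePoint X) := hxa r hr.1 hr.2
        rw [← hlim]
        exact ht2.congr fun n => hxa _ (hg _).1 (hg _).2
      · have hev : ∀ᶠ n in Filter.atTop, g (ψ n) < r := by
          filter_upwards [Filter.not_frequently.mp hfg, Filter.not_frequently.mp hfr]
            with n hn1 hn2
          exact lt_of_le_of_ne (not_lt.mp hn1) hn2
        have hr0 : 0 < r := by
          obtain ⟨n, hn⟩ := hev.exists
          exact lt_of_le_of_lt (hg (ψ n)).1 hn
        obtain ⟨c, hc⟩ := hx.2.2.2.2 r hr0 hxr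
        have ht1 : Filter.Tendsto (fun n => g (ψ n)) Filter.atTop (nhdsWithin r (Set.Iio r)) :=
          tendsto_nhdsWithin_of_tendsto_nhds_of_eventually_within _ hgψ hev
        have ht2 := hc.comp ht1
        refine ⟨c, ψ, hψ, ?_⟩
        rw [hemb.tendsto_nhds_iff]
        exact ht2.congr fun n => hxa _ (hg _).1 (hg _).2
  refine ⟨closure (a '' Set.Icc 0 b), ?_,
    fun s h1 h2 => ⟨a s, subset_closure ⟨s, ⟨h1, h2⟩, rfl⟩, hxa s h1 h2⟩⟩
  apply IsSeqCompact.isCompact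
  intro f hf
  have hch : ∀ n : ℕ, ∃ s ∈ Set.Icc (0:ℝ) b, dist (f n) (a s) < 1/((n:ℝ)+1) := by
    intro n
    obtain ⟨w, hw, hd⟩ := Metric.mem_closure_iff.mp (hf n) (1/((n:ℝ)+1)) (by positivity)
    obtain ⟨s, hs, rfl⟩ := hw
    exact ⟨s, hs, hd⟩
  choose gg hgg hdist using hch
  obtain ⟨p, φ, hφ, hp⟩ := key (fun n => gg n) (fun n => hgg n)
  refine ⟨p, ?_, φ, hφ, ?_⟩
  · exact mem_closure_of_tendsto hp (Filter.Eventually.of_forall fun n => ⟨gg (φ n), hgg _, rfl⟩)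
  · have hzero : Filter.Tendsto (fun n => dist (f (φ n)) (a (gg (φ n)))) Filter.atTop (nhds 0) := by
      have hb1 : Filter.Tendsto (fun n : ℕ => 1/((φ n : ℝ)+1)) Filter.atTop (nhds 0) :=
        tendsto_one_div_add_atTop_nhds_zero_nat.comp hφ.tendsto_atTop
      exact squeeze_zero (fun n => dist_nonneg) (fun n => (hdist (φ n)).le) hb1
    have := hp.congr_dist (by
      refine hzero.congr fun n => ?_
      rw [dist_comm])
    exact this
end Aux2
section Aux3
set_option linter.unusedSectionVars false
set_option linter.unusedVariables false
set_option maxHeartbeats 1000000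
open Filter Topology Set
variable {X : Type*} [MetricSpace X]

lemma exists_escape {x : Path X} (hx : IsDexp x) {r lo : ℝ} (hlo : 0 ≤ lo) (hlor : lo < r)
    (hne : ∀ s, 0 ≤ s → s < r → x s ≠ OnePoint.infty) (hr : x r = OnePoint.infty)
    (hnc : ¬ IsCompact (closure (pathRange x))) {K : Set X} (hK : IsCompact K) :
    ∃ s, lo < s ∧ s < r ∧ ¬ ∃ a ∈ K, x s = (a : OnePoint X) := by
  by_contra hcon
  push_neg at hcon
  obtain ⟨C, hC, hCc⟩ := exists_compact_range hx hlo
    (fun s h1 h2 => hne s h1 (lt_of_le_of_lt h2 hlor))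
  apply hnc
  apply IsCompact.of_isClosed_subset (hC.union hK) isClosed_closure
  apply closure_minimal ?_ ((hC.union hK).isClosed)
  rintro p ⟨s, hs0, hsp⟩
  rcases lt_or_ge s r with hsr | hsr
  · rcases le_or_gt s lo with hslo | hslo
    · obtain ⟨a, haC, hxa⟩ := hCc s hs0 hslo
      rw [hxa] at hsp
      exact Or.inl ((OnePoint.coe_eq_coe.mp hsp) ▸ haC)
    · obtain ⟨a, haK, hxa⟩ := hcon s hslo hsr
      rw [hxa] at hsp
      exact Or.inr ((OnePoint.coe_eq_coe.mp hsp) ▸ haK)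
  · exfalso
    have : x s = OnePoint.infty := hx.2.1 hsr hr
    rw [this] at hsp
    exact (OnePoint.infty_ne_coe p) hsp

lemma eventually_escape_of_tendsto_infty {K : Set X} (hK : IsCompact K) {f : ℕ → OnePoint X}
    (h : Tendsto f atTop (𝓝 (OnePoint.infty : OnePoint X))) :
    ∀ᶠ k in atTop, ¬ ∃ a ∈ K, f k = (a : OnePoint X) := by
  have hmem : OnePoint.infty ∈ {z : OnePoint X | ¬ ∃ a ∈ K, z = (a : OnePoint X)} := by
    rintro ⟨a, -, hc⟩
    exact (OnePoint.infty_ne_coe a) hc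
  have hopen : IsOpen {z : OnePoint X | ¬ ∃ a ∈ K, z = (a : OnePoint X)} := by
    rw [OnePoint.isOpen_iff_of_mem hmem]
    have hpre : (OnePoint.some ⁻¹' {z : OnePoint X | ¬ ∃ a ∈ K, z = (a : OnePoint X)})ᶜ = K := by
      ext a
      simp only [Set.mem_compl_iff, Set.mem_preimage, Set.mem_setOf_eq, not_not]
      constructor
      · rintro ⟨c, hcK, hc⟩
        obtain rfl : a = c := OnePoint.coe_eq_coe.mp hc
        exact hcK
      · intro ha
        exact ⟨a, ha, rfl⟩
    rw [hpre]
    exact ⟨hK.isClosed, hK⟩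
  exact h.eventually (eventually_of_mem (hopen.mem_nhds hmem) fun z hz => hz)

lemma eventually_lt_timeBij {l : ℕ → ℝ → ℝ} (hl : ∀ k, IsTimeBij (l k)) {T r t : ℝ}
    (hD : ∀ ε > (0:ℝ), ∀ᶠ k in atTop, LogSlopeLe (l k) T ε)
    (ht : 0 ≤ t) (htr : t < r) (hrT : r ≤ T) :
    ∀ᶠ k in atTop, t < l k r := by
  rcases eq_or_lt_of_le ht with rfl | ht0
  · refine Eventually.of_forall fun k => ?_
    have h := (hl k).1 (show (0:ℝ) < r from htr)
    rwa [(hl k).zero'] at h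
  · have hrt1 : 1 < r/t := (one_lt_div ht0).mpr htr
    have hlogpos : 0 < Real.log (r/t) := Real.log_pos hrt1
    set ε := Real.log (r/t) / 2 with hεdef
    refine (hD ε (by linarith)).mono fun k hk => ?_
    have hr0 : 0 < r := ht0.trans htr
    have hsl := slope_lb (hl k).1 hk le_rfl hr0 hrT
    rw [(hl k).zero', sub_zero, sub_zero] at hsl
    have hexp : t / r < Real.exp (-ε) := by
      have h1 : Real.exp (-(Real.log (r/t))) = t/r := by
        rw [Real.exp_neg, Real.exp_log (by positivity), inv_div]
      rw [← h1]
      exact Real.exp_lt_exp.mpr (by linarith)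
    have hmul : t/r*r < Real.exp (-ε) * r := mul_lt_mul_of_pos_right hexp hr0
    rw [div_mul_cancel₀ _ hr0.ne'] at hmul
    linarith

lemma eventually_endpoint_escape {K : Set X} (hK : IsCompact K) (hKne : K.Nonempty)
    {b : X} (hbK : b ∉ K) {w : ℕ → OnePoint X}
    (hdd : ∀ ε > (0:ℝ), ∀ᶠ k in atTop, dd dist ((b : OnePoint X)) (w k) ≤ ε) :
    ∀ᶠ k in atTop, ¬ ∃ a ∈ K, w k = (a : OnePoint X) := by
  have hpos : 0 < Metric.infDist b K := (hK.isClosed.notMem_iff_infDist_pos hKne).mp hbK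
  refine (hdd _ (half_pos hpos)).mono fun k hk => ?_
  rintro ⟨a, haK, hwa⟩
  rw [hwa, dd_coe] at hk
  have h2 : Metric.infDist b K ≤ dist b a := Metric.infDist_le_dist_of_mem haK
  linarith

lemma omegaMod_lt_of_head {z : Path X} {t δ : ℝ} {K : Set X}
    (h0 : ¬ ∃ a ∈ K, z 0 = (a : OnePoint X)) {y : ℝ≥0∞} (hy : 0 < y) :
    omegaMod dist t K z δ < y := by
  refine lt_of_le_of_lt ?_ hy
  unfold omegaMod
  refine le_trans (iInf₂_le ((0, fun _ => 0) : ℕ × (ℕ → ℝ)) ?_) ?_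
  · refine ⟨rfl, fun i hi => absurd hi (Nat.not_lt_zero i), fun s hs hlt => absurd (lt_of_le_of_lt hs hlt) (lt_irrefl 0), fun h => h0 h.2⟩
  · exact iSup_le fun i => iSup_le fun hi => absurd hi (Nat.not_lt_zero i)

lemma le_omegaSup {x : Path X} {N : ℕ} {u : ℕ → ℝ} {i : ℕ} (hi : i < N) {s₁ s₂ : ℝ}
    (h1 : u i ≤ s₁ ∧ s₁ < u (i+1)) (h2 : u i ≤ s₂ ∧ s₂ < u (i+1)) :
    ENNReal.ofReal (dd dist (x s₁) (x s₂)) ≤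
      ⨆ (i : ℕ) (_ : i < N) (s₁ : ℝ) (_ : u i ≤ s₁ ∧ s₁ < u (i+1))
        (s₂ : ℝ) (_ : u i ≤ s₂ ∧ s₂ < u (i+1)), ENNReal.ofReal (dd dist (x s₁) (x s₂)) :=
  le_iSup_of_le i <| le_iSup_of_le hi <| le_iSup_of_le s₁ <| le_iSup_of_le h1 <|
    le_iSup_of_le s₂ <| le_iSup_of_le h2 le_rfl

end Aux3
section Aux4
set_option linter.unusedSectionVars false
set_option linter.unusedVariables false
set_option maxHeartbeats 1000000
open Filter Topology Set
variable {X : Type*} [MetricSpace X]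

lemma build {x z : Path X} {l : ℝ → ℝ} (hl : IsTimeBij l)
    {t δ ε m : ℝ} {K : Set X} (hδ : 0 < δ) (hε : 0 ≤ ε)
    {N : ℕ} (hN : 0 < N) {v : ℕ → ℝ} (hv0 : v 0 = 0)
    (hgap : ∀ i < N, δ < Real.exp (-ε) * (v (i+1) - v i))
    (hxne : ∀ s, 0 ≤ s → s < v N → x s ≠ OnePoint.infty)
    (hM : ∀ i < N, ∀ s₁, v i ≤ s₁ → s₁ < v (i+1) → ∀ s₂, v i ≤ s₂ → s₂ < v (i+1) →
      dd dist (x s₁) (x s₂) ≤ m)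
    (P1 : ∀ s, 0 ≤ s → s < l (v N) → z s ≠ OnePoint.infty)
    (P2 : ∀ s, 0 ≤ s → s < v N → dd dist (x s) (z (l s)) ≤ ε)
    (P3 : LogSlopeLe l (v N) ε)
    (P4 : ¬ (l (v N) ≤ t ∧ ∃ a ∈ K, z (l (v N)) = (a : OnePoint X))) :
    omegaMod dist t K z δ ≤ ENNReal.ofReal (m + 2*ε) := by
  have hvlt : ∀ i < N, v i < v (i+1) := by
    intro i hi
    nlinarith [hgap i hi, Real.exp_pos (-ε), hδ]
  have hvmono := mono_of_gaps hvlt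
  have hvnn : ∀ i, i ≤ N → 0 ≤ v i := by
    intro i hi
    have := hvmono 0 i (Nat.zero_le i) hi
    rwa [hv0] at this
  have hsl : ∀ s₁ s₂, 0 ≤ s₁ → s₁ < s₂ → s₂ ≤ v N →
      Real.exp (-ε)*(s₂ - s₁) ≤ l s₂ - l s₁ :=
    fun s₁ s₂ a b c => slope_lb hl.1 P3 a b c
  have hl0 : l 0 = 0 := hl.zero'
  unfold omegaMod
  refine le_trans (iInf₂_le ((N, fun i => l (v i)) : ℕ × (ℕ → ℝ)) ?_) ?_
  · refine ⟨?_, ?_, ?_, ?_⟩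
    · show l (v 0) = 0
      rw [hv0, hl0]
    · intro i hi
      show l (v i) + δ < l (v (i+1))
      have h1 := hsl (v i) (v (i+1)) (hvnn i hi.le) (hvlt i hi) (hvmono (i+1) N hi le_rfl)
      have h2 := hgap i hi
      linarith
    · exact P1
    · exact P4
  · refine iSup_le fun i => iSup_le fun hi => iSup_le fun s₁' => iSup_le fun hs₁ =>
      iSup_le fun s₂' => iSup_le fun hs₂ => ?_
    obtain ⟨s₁, rfl⟩ := hl.2.1 s₁'
    obtain ⟨s₂, rfl⟩ := hl.2.1 s₂'
    have h1l : v i ≤ s₁ := hl.1.le_iff_le.mp hs₁.1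
    have h1r : s₁ < v (i+1) := hl.1.lt_iff_lt.mp hs₁.2
    have h2l : v i ≤ s₂ := hl.1.le_iff_le.mp hs₂.1
    have h2r : s₂ < v (i+1) := hl.1.lt_iff_lt.mp hs₂.2
    have hiN : i + 1 ≤ N := hi
    have h10 : 0 ≤ s₁ := le_trans (hvnn i (le_of_lt hi)) h1l
    have h20 : 0 ≤ s₂ := le_trans (hvnn i (le_of_lt hi)) h2l
    have h1N : s₁ < v N := lt_of_lt_of_le h1r (hvmono (i+1) N hiN le_rfl)
    have h2N : s₂ < v N := lt_of_lt_of_le h2r (hvmono (i+1) N hiN le_rfl)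
    obtain ⟨a₁, ha₁⟩ := exists_some_of_ne_infty (hxne s₁ h10 h1N)
    obtain ⟨a₂, ha₂⟩ := exists_some_of_ne_infty (hxne s₂ h20 h2N)
    have hl1nn : 0 ≤ l s₁ := by
      have := hl.1.monotone h10; rwa [hl0] at this
    have hl2nn : 0 ≤ l s₂ := by
      have := hl.1.monotone h20; rwa [hl0] at this
    obtain ⟨b₁, hb₁⟩ := exists_some_of_ne_infty (P1 (l s₁) hl1nn (hl.1 h1N))
    obtain ⟨b₂, hb₂⟩ := exists_some_of_ne_infty (P1 (l s₂) hl2nn (hl.1 h2N))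
    have e₁ : dist a₁ b₁ ≤ ε := by
      have := P2 s₁ h10 h1N; rwa [ha₁, hb₁, dd_coe] at this
    have e₂ : dist a₂ b₂ ≤ ε := by
      have := P2 s₂ h20 h2N; rwa [ha₂, hb₂, dd_coe] at this
    have eM : dist a₁ a₂ ≤ m := by
      have := hM i hi s₁ h1l h1r s₂ h2l h2r; rwa [ha₁, ha₂, dd_coe] at this
    rw [hb₁, hb₂, dd_coe]
    refine ENNReal.ofReal_le_ofReal ?_
    have htri := dist_triangle4 b₁ a₁ a₂ b₂
    have hc1 : dist b₁ a₁ = dist a₁ b₁ := dist_comm _ _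
    linarith

lemma build_ev {x : Path X} {xk : ℕ → Path X}
    {l : ℕ → ℝ → ℝ} (hl : ∀ k, IsTimeBij (l k))
    {t δ : ℝ} {K : Set X} (hδ : 0 < δ)
    {N : ℕ} (hN : 0 < N) {v : ℕ → ℝ} (hv0 : v 0 = 0)
    (hvgap : ∀ i < N, δ < v (i+1) - v i)
    (hxne : ∀ s, 0 ≤ s → s < v N → x s ≠ OnePoint.infty)
    {m c : ℝ} (hmc : m < c)
    (hM : ∀ i < N, ∀ s₁, v i ≤ s₁ → s₁ < v (i+1) → ∀ s₂, v i ≤ s₂ → s₂ < v (i+1) →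
      dd dist (x s₁) (x s₂) ≤ m)
    (hP1 : ∀ᶠ k in atTop, ∀ s, 0 ≤ s → s < l k (v N) → xk k s ≠ OnePoint.infty)
    (hP2 : ∀ ε > (0:ℝ), ∀ᶠ k in atTop, ∀ s, 0 ≤ s → s < v N →
      dd dist (x s) (xk k (l k s)) ≤ ε)
    (hP3 : ∀ ε > (0:ℝ), ∀ᶠ k in atTop, LogSlopeLe (l k) (v N) ε)
    (hP4 : ∀ᶠ k in atTop, ¬ (l k (v N) ≤ t ∧ ∃ a ∈ K, xk k (l k (v N)) = (a : OnePoint X))) :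
    ∀ᶠ k in atTop, omegaMod dist t K (xk k) δ ≤ ENNReal.ofReal c := by
  obtain ⟨g, hgδ, hg⟩ : ∃ g : ℝ, δ < g ∧ ∀ i < N, g ≤ v (i+1) - v i := by
    have hne : ((Finset.range N).image fun i => v (i+1) - v i).Nonempty :=
      Finset.image_nonempty.mpr ⟨0, Finset.mem_range.mpr hN⟩
    refine ⟨Finset.min' _ hne, ?_, ?_⟩
    · obtain ⟨i, hi, hie⟩ := Finset.mem_image.mp (Finset.min'_mem _ hne)
      rw [← hie]
      exact hvgap i (Finset.mem_range.mp hi)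
    · intro i hi
      exact Finset.min'_le _ _ (Finset.mem_image.mpr ⟨i, Finset.mem_range.mpr hi, rfl⟩)
  have hgpos : 0 < g := hδ.trans hgδ
  have hglog : 0 < Real.log (g/δ) := Real.log_pos ((one_lt_div hδ).mpr hgδ)
  set ε := min (Real.log (g/δ) / 2) ((c - m)/2) with hεdef
  have hεpos : 0 < ε := lt_min (by linarith) (by linarith)
  have hεle : ε ≤ (c-m)/2 := min_le_right _ _
  have hkey : δ / g < Real.exp (-ε) := by
    have h1 : Real.exp (-(Real.log (g/δ))) = δ/g := by
      rw [Real.exp_neg, Real.exp_log (by positivity), inv_div]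
    rw [← h1]
    refine Real.exp_lt_exp.mpr ?_
    have h2 : ε ≤ Real.log (g/δ)/2 := min_le_left _ _
    linarith
  have hgap' : ∀ i < N, δ < Real.exp (-ε) * (v (i+1) - v i) := by
    intro i hi
    have h2 : Real.exp (-ε) * g ≤ Real.exp (-ε) * (v (i+1) - v i) :=
      mul_le_mul_of_nonneg_left (hg i hi) (Real.exp_pos _).le
    have h3 : δ/g*g < Real.exp (-ε) * g := mul_lt_mul_of_pos_right hkey hgpos
    rw [div_mul_cancel₀ _ hgpos.ne'] at h3
    linarith
  filter_upwards [hP1, hP2 ε hεpos, hP3 ε hεpos, hP4] with k h1 h2 h3 h4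
  refine le_trans (build (hl k) hδ hεpos.le hN hv0 hgap' hxne hM h1 h2 h3 h4) ?_
  exact ENNReal.ofReal_le_ofReal (by linarith)

end Aux4
section Aux5
set_option linter.unusedSectionVars false
set_option linter.unusedVariables false
set_option maxHeartbeats 2000000
open Filter Topology Set
variable {X : Type*} [MetricSpace X]

lemma eventually_omegaMod_lt {x : Path X} (hx : IsDexp x)
    {xk : ℕ → Path X} (hxk : ∀ k, IsDexp (xk k))
    (hconv : ConvLoc dist xk x)
    {t : ℝ} (ht : 0 ≤ t) {K : Set X} (hK : IsCompact K)
    {δ : ℝ} (hδ : 0 < δ) {y : ℝ≥0∞} (hy : omegaMod dist t K x δ < y) :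
    ∀ᶠ k in atTop, omegaMod dist t K (xk k) δ < y := by
  have hy0 : (0:ℝ≥0∞) < y := lt_of_le_of_lt zero_le hy
  rcases K.eq_empty_or_nonempty with rfl | hKne
  · exact Eventually.of_forall fun k => omegaMod_lt_of_head (by simp) hy0
  unfold omegaMod at hy
  obtain ⟨p, hp⟩ := iInf_lt_iff.mp hy
  obtain ⟨hcond, hFp⟩ := iInf_lt_iff.mp hp
  obtain ⟨N, u⟩ := p
  simp only at hcond hFp
  obtain ⟨hu0, hugap, hune, huend⟩ := hcond
  obtain ⟨c', hMc', hc'y⟩ := exists_between hFp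
  obtain ⟨c'', hc'c'', hc''y⟩ := exists_between hc'y
  have hc'ne : c' ≠ ⊤ := hc'c''.ne_top
  have hc''ne : c'' ≠ ⊤ := hc''y.ne_top
  have hMr : ∀ i < N, ∀ s₁, u i ≤ s₁ → s₁ < u (i+1) → ∀ s₂, u i ≤ s₂ → s₂ < u (i+1) →
      dd dist (x s₁) (x s₂) ≤ c'.toReal := by
    intro i hi s₁ h1 h2 s₂ h3 h4
    have hle : ENNReal.ofReal (dd dist (x s₁) (x s₂)) ≤ c' :=
      (lt_of_le_of_lt (le_omegaSup hi ⟨h1, h2⟩ ⟨h3, h4⟩) hMc').le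
    have := ENNReal.toReal_mono hc'ne hle
    rwa [ENNReal.toReal_ofReal (dd_dist_nonneg _ _)] at this
  have hmc : c'.toReal < c''.toReal :=
    (ENNReal.toReal_lt_toReal hc'ne hc''ne).mpr hc'c''
  obtain ⟨l, hlLip, hcase1, hcase2⟩ := hconv
  have hl : ∀ k, IsTimeBij (l k) := fun k => (hlLip k).1
  have hfinish : (∀ᶠ k in atTop, omegaMod dist t K (xk k) δ ≤ ENNReal.ofReal c''.toReal) →
      ∀ᶠ k in atTop, omegaMod dist t K (xk k) δ < y := by
    intro h
    refine h.mono fun k hk => lt_of_le_of_lt hk ?_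
    rw [ENNReal.ofReal_toReal hc''ne]
    exact hc''y
  rcases Nat.eq_zero_or_pos N with rfl | hN
  · -- N = 0
    rw [hu0] at huend
    have hx0K : ¬ ∃ a ∈ K, x 0 = (a : OnePoint X) := fun h => huend ⟨ht, h⟩
    by_cases hx0 : x 0 = OnePoint.infty
    · -- x is the dead path
      have hpr : pathRange x = ∅ := by
        ext a
        simp only [pathRange, mem_setOf_eq, mem_empty_iff_false, iff_false]
        rintro ⟨s, hs0, hsa⟩
        have hs : x s = OnePoint.infty := hx.2.1 hs0 hx0
        rw [hs] at hsa
        exact (OnePoint.infty_ne_coe a) hsa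
      have hC1 : Case1 x := ⟨⟨0, hx0⟩, by rw [hpr, closure_empty]; exact isCompact_empty⟩
      have hxiS : xiSet x = univ := by
        ext s
        simp only [xiSet, mem_setOf_eq, mem_univ, iff_true]
        rcases le_or_gt s 0 with h | h
        · rw [hx.1 s h]; exact hx0
        · exact hx.2.1 h.le hx0
      have hxiR : xiR x = 0 := by
        rw [xiR, hxiS]
        exact Real.sInf_of_not_bddBelow (by simp [not_bddBelow_univ (α := ℝ)])
      obtain ⟨hA, hB, hCt, hD⟩ := hcase1 hC1
      have hC0 : Tendsto (fun k => xk k 0) atTop (𝓝 (OnePoint.infty : OnePoint X)) := by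
        have he : (fun k => xk k (l k (xiR x))) = fun k => xk k 0 := by
          funext k
          rw [hxiR, (hl k).zero']
        rwa [he] at hCt
      filter_upwards [eventually_escape_of_tendsto_infty hK hC0] with k hk
      exact omegaMod_lt_of_head hk hy0
    · obtain ⟨b, hb⟩ := exists_some_of_ne_infty hx0
      have hbK : b ∉ K := fun h => hx0K ⟨b, h, hb⟩
      have hdd : ∀ ε > (0:ℝ), ∀ᶠ k in atTop,
          dd dist ((b : OnePoint X)) (xk k (l k 0)) ≤ ε := by
        intro ε hε
        by_cases hC : Case1 x
        · have h0xi : (0:ℝ) < xiR x := lt_xiR hx hC.1 le_rfl hx0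
          refine ((hcase1 hC).2.1 ε hε).mono fun k hk => ?_
          have := hk 0 le_rfl h0xi
          rwa [hb] at this
        · refine ((hcase2 hC 0 le_rfl hx0).2.1 ε hε).mono fun k hk => ?_
          have := hk 0 le_rfl le_rfl
          rwa [hb] at this
      filter_upwards [eventually_endpoint_escape hK hKne hbK hdd] with k hk
      refine omegaMod_lt_of_head ?_ hy0
      have h0 : l k 0 = 0 := (hl k).zero'
      rwa [← h0]
  · -- N ≥ 1
    have hult : ∀ i < N, u i < u (i+1) := fun i hi => by linarith [hugap i hi]
    have humono := mono_of_gaps hult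
    have hunn : ∀ i, i ≤ N → 0 ≤ u i := by
      intro i hi
      have := humono 0 i (Nat.zero_le i) hi
      rwa [hu0] at this
    have huN0 : 0 < u N := by
      have h1 : u 0 + δ < u 1 := hugap 0 hN
      have h2 : u 1 ≤ u N := humono 1 N hN le_rfl
      rw [hu0] at h1
      linarith
    have hvgap : ∀ i < N, δ < u (i+1) - u i := fun i hi => by linarith [hugap i hi]
    by_cases hC : Case1 x
    · -- Case 1
      obtain ⟨hA, hB, hCt, hD⟩ := hcase1 hC
      by_cases hxN : x (u N) = OnePoint.infty
      · -- explosion exactly at u N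
        have hxiR : xiR x = u N := xiR_eq hx huN0 hune hxN
        rw [hxiR] at hA hB hCt hD
        have hP4 : ∀ᶠ k in atTop,
            ¬ (l k (u N) ≤ t ∧ ∃ a ∈ K, xk k (l k (u N)) = (a : OnePoint X)) :=
          (eventually_escape_of_tendsto_infty hK hCt).mono fun k hk hcon => hk hcon.2
        exact hfinish (build_ev hl hδ hN hu0 hvgap hune hmc hMr hA hB hD hP4)
      · -- x (u N) ∈ X
        have huNlt : u N < xiR x := lt_xiR hx hC.1 (hunn N le_rfl) hxN
        have hP1 : ∀ᶠ k in atTop, ∀ s, 0 ≤ s → s < l k (u N) → xk k s ≠ OnePoint.infty :=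
          hA.mono fun k hk s hs hlt => hk s hs (lt_trans hlt ((hl k).1 huNlt))
        have hP2 : ∀ ε > (0:ℝ), ∀ᶠ k in atTop, ∀ s, 0 ≤ s → s < u N →
            dd dist (x s) (xk k (l k s)) ≤ ε :=
          fun ε hε => (hB ε hε).mono fun k hk s hs hlt => hk s hs (hlt.trans huNlt)
        have hP3 : ∀ ε > (0:ℝ), ∀ᶠ k in atTop, LogSlopeLe (l k) (u N) ε :=
          fun ε hε => (hD ε hε).mono fun k hk => logSlopeLe_mono hk huNlt.le
        have hP4 : ∀ᶠ k in atTop,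
            ¬ (l k (u N) ≤ t ∧ ∃ a ∈ K, xk k (l k (u N)) = (a : OnePoint X)) := by
          rcases lt_or_ge t (u N) with hut | hut
          · refine (eventually_lt_timeBij hl hD ht hut huNlt.le).mono fun k hk hcon => ?_
            exact absurd hcon.1 (not_le.mpr hk)
          · obtain ⟨b, hb⟩ := exists_some_of_ne_infty hxN
            have hbK : b ∉ K := fun h => huend ⟨hut, b, h, hb⟩
            have hdd : ∀ ε > (0:ℝ), ∀ᶠ k in atTop,
                dd dist ((b : OnePoint X)) (xk k (l k (u N))) ≤ ε := by
              intro ε hε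
              refine (hB ε hε).mono fun k hk => ?_
              have := hk (u N) (hunn N le_rfl) huNlt
              rwa [hb] at this
            exact (eventually_endpoint_escape hK hKne hbK hdd).mono fun k hk hcon => hk hcon.2
        exact hfinish (build_ev hl hδ hN hu0 hvgap hune hmc hMr hP1 hP2 hP3 hP4)
    · -- not Case 1
      by_cases hxN : x (u N) = OnePoint.infty
      · -- Case III: explosion at u N without relatively compact range
        have hnc : ¬ IsCompact (closure (pathRange x)) := fun h => hC ⟨⟨u N, hxN⟩, h⟩
        have hNN : N - 1 + 1 = N := Nat.succ_pred_eq_of_pos hN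
        have hkeygap : u (N-1) + δ < u N := by
          have := hugap (N-1) (by omega)
          rwa [hNN] at this
        have hun1nn : 0 ≤ u (N-1) := hunn (N-1) (Nat.sub_le N 1)
        set lo := (u (N-1) + δ + u N)/2 with hlodef
        have hlo1 : u (N-1) + δ < lo := by rw [hlodef]; linarith
        have hlo2 : lo < u N := by rw [hlodef]; linarith
        have hlo0 : 0 ≤ lo := by linarith
        obtain ⟨s', hs'gap, hs'lt, hdico⟩ :
            ∃ s', u (N-1) + δ < s' ∧ s' < u N ∧
              (t < s' ∨ ∃ b : X, x s' = (b : OnePoint X) ∧ b ∉ K) := by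
          rcases lt_or_ge t (u N) with hut | hut
          · refine ⟨max lo ((t + u N)/2), ?_, ?_, Or.inl ?_⟩
            · exact lt_of_lt_of_le hlo1 (le_max_left _ _)
            · exact max_lt hlo2 (by linarith)
            · exact lt_of_lt_of_le (by linarith) (le_max_right _ _)
          · obtain ⟨s', h1, h2, h3⟩ := exists_escape hx hlo0 hlo2 hune hxN hnc hK
            have hs'0 : 0 ≤ s' := le_trans hlo0 h1.le
            obtain ⟨b, hb⟩ := exists_some_of_ne_infty (hune s' hs'0 h2)
            exact ⟨s', by linarith, h2, Or.inr ⟨b, hb, fun hbK => h3 ⟨b, hbK, hb⟩⟩⟩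
        have hs'0 : 0 < s' := by linarith
        have hxs' : x s' ≠ OnePoint.infty := hune s' hs'0.le hs'lt
        obtain ⟨hi1, hi2, hi3⟩ := hcase2 hC s' hs'0.le hxs'
        set v : ℕ → ℝ := fun i => if i < N then u i else s' with hvdef
        have hvN : v N = s' := if_neg (lt_irrefl N)
        have hv0 : v 0 = 0 := by
          have : v 0 = u 0 := if_pos hN
          rw [this, hu0]
        have hvgap' : ∀ i < N, δ < v (i+1) - v i := by
          intro i hi
          have hvi : v i = u i := if_pos hi
          by_cases hi1N : i + 1 < N
          · have : v (i+1) = u (i+1) := if_pos hi1N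
            rw [this, hvi]
            exact hvgap i hi
          · have hieq : i + 1 = N := by omega
            have : v (i+1) = s' := by rw [hieq, hvN]
            rw [this, hvi]
            have : i = N - 1 := by omega
            rw [this]
            linarith
        have hvle : ∀ i, i ≤ N → v i ≤ u i := by
          intro i hi
          by_cases h : i < N
          · exact le_of_eq (if_pos h)
          · have : i = N := by omega
            rw [this, hvN]
            exact hs'lt.le
        have hvne : ∀ s, 0 ≤ s → s < v N → x s ≠ OnePoint.infty := by
          intro s hs hlt
          rw [hvN] at hlt
          exact hune s hs (hlt.trans hs'lt)
        have hMv : ∀ i < N, ∀ s₁, v i ≤ s₁ → s₁ < v (i+1) → ∀ s₂, v i ≤ s₂ → s₂ < v (i+1) →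
            dd dist (x s₁) (x s₂) ≤ c'.toReal := by
          intro i hi s₁ h1 h2 s₂ h3 h4
          have hvi : v i = u i := if_pos hi
          have hvip : v (i+1) ≤ u (i+1) := by
            by_cases h : i + 1 < N
            · exact le_of_eq (if_pos h)
            · have hieq : i + 1 = N := by omega
              calc v (i+1) = s' := by rw [hieq, hvN]
                _ ≤ u N := hs'lt.le
                _ = u (i+1) := by rw [hieq]
          exact hMr i hi s₁ (hvi ▸ h1) (lt_of_lt_of_le h2 hvip)
            s₂ (hvi ▸ h3) (lt_of_lt_of_le h4 hvip)
        have hP1 : ∀ᶠ k in atTop, ∀ s, 0 ≤ s → s < l k (v N) → xk k s ≠ OnePoint.infty := by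
          refine hi1.mono fun k hk s hs hlt heq => ?_
          rw [hvN] at hlt
          exact hk ((hxk k).2.1 hlt.le heq)
        have hP2 : ∀ ε > (0:ℝ), ∀ᶠ k in atTop, ∀ s, 0 ≤ s → s < v N →
            dd dist (x s) (xk k (l k s)) ≤ ε := by
          intro ε hε
          refine (hi2 ε hε).mono fun k hk s hs hlt => ?_
          rw [hvN] at hlt
          exact hk s hs hlt.le
        have hP3 : ∀ ε > (0:ℝ), ∀ᶠ k in atTop, LogSlopeLe (l k) (v N) ε := by
          intro ε hε
          refine (hi3 ε hε).mono fun k hk => ?_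
          rw [hvN]
          exact hk
        have hP4 : ∀ᶠ k in atTop,
            ¬ (l k (v N) ≤ t ∧ ∃ a ∈ K, xk k (l k (v N)) = (a : OnePoint X)) := by
          rcases hdico with hts' | ⟨b, hb, hbK⟩
          · refine (eventually_lt_timeBij hl hi3 ht hts' le_rfl).mono fun k hk hcon => ?_
            rw [hvN] at hcon
            exact absurd hcon.1 (not_le.mpr hk)
          · have hdd : ∀ ε > (0:ℝ), ∀ᶠ k in atTop,
                dd dist ((b : OnePoint X)) (xk k (l k s')) ≤ ε := by
              intro ε hε
              refine (hi2 ε hε).mono fun k hk => ?_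
              have := hk s' hs'0.le le_rfl
              rwa [hb] at this
            refine (eventually_endpoint_escape hK hKne hbK hdd).mono fun k hk hcon => ?_
            rw [hvN] at hcon
            exact hk hcon.2
        exact hfinish (build_ev hl hδ hN hv0 hvgap' hvne hmc hMv hP1 hP2 hP3 hP4)
      · -- x (u N) ∈ X, not Case 1
        obtain ⟨hi1, hi2, hi3⟩ := hcase2 hC (u N) (hunn N le_rfl) hxN
        have hP1 : ∀ᶠ k in atTop, ∀ s, 0 ≤ s → s < l k (u N) → xk k s ≠ OnePoint.infty :=
          hi1.mono fun k hk s hs hlt heq => hk ((hxk k).2.1 hlt.le heq)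
        have hP2 : ∀ ε > (0:ℝ), ∀ᶠ k in atTop, ∀ s, 0 ≤ s → s < u N →
            dd dist (x s) (xk k (l k s)) ≤ ε :=
          fun ε hε => (hi2 ε hε).mono fun k hk s hs hlt => hk s hs hlt.le
        have hP4 : ∀ᶠ k in atTop,
            ¬ (l k (u N) ≤ t ∧ ∃ a ∈ K, xk k (l k (u N)) = (a : OnePoint X)) := by
          rcases lt_or_ge t (u N) with hut | hut
          · refine (eventually_lt_timeBij hl hi3 ht hut le_rfl).mono fun k hk hcon => ?_
            exact absurd hcon.1 (not_le.mpr hk)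
          · obtain ⟨b, hb⟩ := exists_some_of_ne_infty hxN
            have hbK : b ∉ K := fun h => huend ⟨hut, b, h, hb⟩
            have hdd : ∀ ε > (0:ℝ), ∀ᶠ k in atTop,
                dd dist ((b : OnePoint X)) (xk k (l k (u N))) ≤ ε := by
              intro ε hε
              refine (hi2 ε hε).mono fun k hk => ?_
              have := hk (u N) (hunn N le_rfl) le_rfl
              rwa [hb] at this
            exact (eventually_endpoint_escape hK hKne hbK hdd).mono fun k hk hcon => hk hcon.2
        exact hfinish (build_ev hl hδ hN hu0 hvgap hune hmc hMr hP1 hP2 hi3 hP4)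
end Aux5

/-- (Proposition 2.8 ii)). For every `t ≥ 0`, every compact `K ⊆ S` and
every `δ > 0`, the map `x ↦ ω'_{t,K,x}(δ)` is upper semi-continuous from `𝔻_loc(S)` (with
the local Skorokhod topology) to `[0,∞]`. -/
theorem omegaMod_upperSemicontinuous
    {S : Type*} [MetricSpace S] [SecondCountableTopology S] [LocallyCompactSpace S]
    (T : TopologicalSpace (DlocT S)) (hPol : @PolishSpace _ T)
    (hT : ∀ (xk : ℕ → DlocT S) (x : DlocT S),
      Tendsto xk atTop (@nhds _ T x) ↔ ConvLoc dist (fun k => (xk k).1) x.1)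
    (t : ℝ) (ht : 0 ≤ t) (K : Set S) (hK : IsCompact K) (δ : ℝ) (hδ : 0 < δ) :
    @UpperSemicontinuous (DlocT S) ℝ≥0∞ T _ (fun x => omegaMod dist t K x.1 δ) := by
  letI := T
  haveI := hPol
  intro x y hy
  by_contra hcon
  have hx : x ∈ closure {z : DlocT S | ¬ omegaMod dist t K z.1 δ < y} := by
    rw [mem_closure_iff_nhds]
    intro U hU
    by_contra hem
    apply hcon
    refine Filter.mem_of_superset hU fun z hz => ?_
    by_contra hz'
    exact hem ⟨z, hz, hz'⟩
  obtain ⟨u, hu, hulim⟩ := mem_closure_iff_seq_limit.mp hx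
  have hconv := (hT u x).mp hulim
  have hev := eventually_omegaMod_lt x.2.1 (fun k => (u k).2.1) hconv ht hK hδ hy
  obtain ⟨k, hk⟩ := hev.exists
  exact hu k hk

end LocSkor
end
end

section
/- (i) If g ∈ C^{≠0}(S,ℝ₊) is bounded and x ∈ D(S), then g·x ∈ D(S). (ii) If g ∈ C̃^{≠0}(S,ℝ₊) and x ∈ D_loc(S), then g·x ∈ D_loc(S). -/
open Filter Topology Set MeasureTheory
open scoped ENNReal NNReal

noncomputable section

namespace LocSkor

variable {S : Type*} [TopologicalSpace S]

/-! ### Auxiliary development for Statement 11 -/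

section TimeChangeProof
set_option linter.unusedSectionVars false

variable {S : Type*} [MetricSpace S] [SecondCountableTopology S] [LocallyCompactSpace S]

variable {g : S → ℝ} {x : Path S}

/-- The exit time of `{g ≠ 0}`. -/
noncomputable def TT (g : S → ℝ) (x : Path S) : ℝ≥0∞ := tauU {a : S | g a ≠ 0} x

/-- The integrand `1/g(x_u)`. -/
noncomputable def ff (g : S → ℝ) (x : Path S) : ℝ → ℝ≥0∞ :=
  fun u => (ENNReal.ofReal (gOP g (x u)))⁻¹

/-- A time strictly before the exit time. -/
def good (g : S → ℝ) (x : Path S) (s : ℝ) : Prop := 0 ≤ s ∧ ENNReal.ofReal s < TT g x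

lemma TT_le {t : ℝ} (ht : 0 ≤ t)
    (h : (0 < t ∧ ¬∃ a, g a ≠ 0 ∧ Tendsto x (𝓝[<] t) (𝓝 (a : OnePoint S))) ∨
      ¬∃ a, g a ≠ 0 ∧ x t = (a : OnePoint S)) :
    TT g x ≤ ENNReal.ofReal t := by
  refine iInf₂_le t ?_
  exact ⟨ht, h⟩

lemma good_spec {s : ℝ} (h : good g x s) : ∃ a, g a ≠ 0 ∧ x s = (a : OnePoint S) := by
  by_contra hc
  exact absurd (TT_le h.1 (Or.inr hc)) (not_le.2 h.2)

lemma good_spec_ll {s : ℝ} (h : good g x s) (hs : 0 < s) :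
    ∃ a, g a ≠ 0 ∧ Tendsto x (𝓝[<] s) (𝓝 (a : OnePoint S)) := by
  by_contra hc
  exact absurd (TT_le h.1 (Or.inl ⟨hs, hc⟩)) (not_le.2 h.2)

lemma good_mono {s s' : ℝ} (h : good g x s) (h0 : 0 ≤ s') (hss : s' ≤ s) : good g x s' :=
  ⟨h0, lt_of_le_of_lt (ENNReal.ofReal_le_ofReal hss) h.2⟩

lemma xs_ne {s : ℝ} (h : good g x s) : x s ≠ OnePoint.infty := by
  obtain ⟨a, -, ha⟩ := good_spec h
  rw [ha]; exact OnePoint.coe_ne_infty a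

lemma gOP_coe (g : S → ℝ) (a : S) : gOP g (a : OnePoint S) = g a := rfl

lemma gOP_pos (hg : Czero g) {s : ℝ} (h : good g x s) : 0 < gOP g (x s) := by
  obtain ⟨a, ha, hxa⟩ := good_spec h
  rw [hxa, gOP_coe]
  exact lt_of_le_of_ne (hg.1 a) (Ne.symm ha)

lemma contAt_gOP (hg : Czero g) {a : S} (ha : g a ≠ 0) :
    ContinuousAt (gOP g) (a : OnePoint S) := by
  rw [OnePoint.continuousAt_coe]
  have : IsOpen {b : S | g b ≠ 0} := by
    have := hg.2.1
    rw [show {b : S | g b ≠ 0} = {b : S | g b = 0}ᶜ from rfl]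
    exact this.isOpen_compl
  have hca : ContinuousAt g a := (hg.2.2.continuousAt (this.mem_nhds ha))
  exact hca.congr (by filter_upwards with b using rfl)

lemma tendsto_gOP_comp {F : Filter ℝ} {a : S} (hg : Czero g) (ha : g a ≠ 0)
    (hx : Tendsto x F (𝓝 (a : OnePoint S))) :
    Tendsto (fun v => gOP g (x v)) F (𝓝 (g a)) := by
  have := (contAt_gOP hg ha).tendsto.comp hx
  exact this

lemma H_rc (hg : Czero g) (hx : IsDexp x) {u : ℝ} (h : good g x u) :
    Tendsto (fun v => gOP g (x v)) (𝓝[≥] u) (𝓝 (gOP g (x u))) := by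
  obtain ⟨a, ha, hxa⟩ := good_spec h
  have hrc : Tendsto x (𝓝[>] u) (𝓝 (x u)) := hx.2.2.2.1 u h.1 (xs_ne h)
  have hIci : Tendsto x (𝓝[≥] u) (𝓝 (x u)) := by
    rw [show (Ici u) = insert u (Ioi u) from Set.Ioi_insert.symm, nhdsWithin_insert,
      tendsto_sup]
    exact ⟨tendsto_pure_nhds x u, hrc⟩
  have := tendsto_gOP_comp hg ha (hxa ▸ hIci)
  rwa [hxa, gOP_coe]

lemma H_ll (hg : Czero g) {u : ℝ} (h : good g x u) (hu : 0 < u) :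
    ∃ c, 0 < c ∧ Tendsto (fun v => gOP g (x v)) (𝓝[<] u) (𝓝 c) := by
  obtain ⟨a, ha, hxa⟩ := good_spec_ll h hu
  exact ⟨g a, lt_of_le_of_ne (hg.1 a) (Ne.symm ha), tendsto_gOP_comp hg ha hxa⟩

lemma lowerBound (hg : Czero g) (hx : IsDexp x) {b : ℝ} (hb : good g x b) :
    ∃ ε > 0, ∀ v, 0 ≤ v → v ≤ b → ε ≤ gOP g (x v) := by
  set H : ℝ → ℝ := fun v => gOP g (x v) with hH
  set E : Set ℝ := {u | u ∈ Icc 0 b ∧ ∃ ε > 0, ∀ v ∈ Icc 0 u, ε ≤ H v} with hE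
  have hgood0 : good g x 0 := good_mono hb le_rfl hb.1
  have h0 : (0:ℝ) ∈ E := by
    refine ⟨⟨le_rfl, hb.1⟩, H 0, gOP_pos hg hgood0, ?_⟩
    intro v hv
    have : v = 0 := le_antisymm hv.2 hv.1
    rw [this]
  have hbdd : BddAbove E := ⟨b, fun u hu => hu.1.2⟩
  have hne : E.Nonempty := ⟨0, h0⟩
  set m := sSup E with hm
  have hm0 : 0 ≤ m := le_csSup hbdd h0
  have hmb : m ≤ b := csSup_le hne (fun u hu => hu.1.2)
  have hmgood : good g x m := good_mono hb hm0 hmb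
  have hPm : ∃ ε > 0, ∀ v ∈ Icc 0 m, ε ≤ H v := by
    rcases eq_or_lt_of_le hm0 with heq | hlt
    · obtain ⟨ε, hε, hv⟩ := h0.2
      exact ⟨ε, hε, by rw [← heq]; exact hv⟩
    · obtain ⟨c0, hc0pos, hll⟩ := H_ll hg hmgood hlt
      have hev : ∀ᶠ v in 𝓝[<] m, c0/2 < H v :=
        hll.eventually (eventually_gt_nhds (by linarith))
      obtain ⟨c, hc, hsub⟩ := mem_nhdsLT_iff_exists_Ioo_subset.1 hev
      have hc'm : max c 0 < m := max_lt hc hlt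
      obtain ⟨u, huE, huc⟩ := exists_lt_of_lt_csSup hne hc'm
      obtain ⟨ε₁, hε₁, hv₁⟩ := huE.2
      have hHm : 0 < H m := gOP_pos hg hmgood
      refine ⟨min (min ε₁ (c0/2)) (H m), by positivity, ?_⟩
      intro v hv
      rcases le_or_gt v u with h1 | h2
      · exact le_trans (min_le_of_left_le (min_le_left _ _)) (hv₁ v ⟨hv.1, h1⟩)
      rcases eq_or_lt_of_le hv.2 with hvm | hvm
      · exact le_trans (min_le_right _ _) (le_of_eq (by rw [hvm]))
      · have hvc : v ∈ Ioo c m := by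
          refine ⟨lt_of_le_of_lt (le_max_left c 0) (lt_trans huc h2), hvm⟩
        exact le_trans (min_le_of_left_le (min_le_right _ _)) (le_of_lt (hsub hvc))
  have hmeqb : m = b := by
    by_contra hne'
    have hmltb : m < b := lt_of_le_of_ne hmb hne'
    have hHm : 0 < H m := gOP_pos hg hmgood
    have hrc := H_rc hg hx hmgood
    have hev : ∀ᶠ v in 𝓝[≥] m, H m / 2 < H v :=
      hrc.eventually (eventually_gt_nhds (by linarith))
    obtain ⟨d, hd, hsub⟩ := mem_nhdsGE_iff_exists_Ico_subset.1 hev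
    obtain ⟨ε, hε, hv⟩ := hPm
    have hu'm : m < min ((m+d)/2) b := by
      refine lt_min (by linarith [mem_Ioi.1 hd]) hmltb
    have hu'E : min ((m+d)/2) b ∈ E := by
      refine ⟨⟨le_trans hm0 (le_of_lt hu'm), min_le_right _ _⟩,
        min ε (H m / 2), lt_min hε (by linarith), ?_⟩
      intro v hv'
      rcases le_or_gt v m with h1 | h2
      · exact le_trans (min_le_left _ _) (hv v ⟨hv'.1, h1⟩)
      · have hvd : v ∈ Ico m d := by
          refine ⟨le_of_lt h2, lt_of_le_of_lt (le_trans hv'.2 (min_le_left _ _)) ?_⟩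
          linarith [mem_Ioi.1 hd]
        exact le_trans (min_le_right _ _) (le_of_lt (hsub hvd))
    exact absurd (le_csSup hbdd hu'E) (not_le.2 hu'm)
  obtain ⟨ε, hε, hv⟩ := hPm
  rw [hmeqb] at hv
  exact ⟨ε, hε, fun v h0v hvb => hv v ⟨h0v, hvb⟩⟩
/-- The open pre-exit region. -/
def Bset (g : S → ℝ) (x : Path S) : Set ℝ := {u | 0 < u ∧ ENNReal.ofReal u < TT g x}

lemma Bset_eq_top (h : TT g x = ⊤) : Bset g x = Ioi 0 := by
  ext u; simp [Bset, h, ENNReal.ofReal_lt_top]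

lemma Bset_eq (h : TT g x ≠ ⊤) : Bset g x = Ioo 0 (TT g x).toReal := by
  ext u
  simp only [Bset, mem_setOf_eq, mem_Ioo]
  constructor
  · rintro ⟨h1, h2⟩; exact ⟨h1, (ENNReal.ofReal_lt_iff_lt_toReal h1.le h).1 h2⟩
  · rintro ⟨h1, h2⟩; exact ⟨h1, (ENNReal.ofReal_lt_iff_lt_toReal h1.le h).2 h2⟩

lemma measurableSet_Bset : MeasurableSet (Bset g x) := by
  rcases eq_or_ne (TT g x) ⊤ with h | h
  · rw [Bset_eq_top h]; exact measurableSet_Ioi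
  · rw [Bset_eq h]; exact measurableSet_Ioo

lemma ff_pos (u : ℝ) : 0 < ff g x u :=
  ENNReal.inv_pos.2 ENNReal.ofReal_ne_top

lemma ff_rc (hg : Czero g) (hx : IsDexp x) {u : ℝ} (h : good g x u) :
    Tendsto (ff g x) (𝓝[≥] u) (𝓝 (ff g x u)) :=
  ((ENNReal.continuous_ofReal.tendsto _).comp (H_rc hg hx h)).inv

lemma measurable_ffB (hg : Czero g) (hx : IsDexp x) :
    Measurable ((Bset g x).indicator (ff g x)) := by
  have hBmeas : MeasurableSet (Bset g x) := measurableSet_Bset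
  set φ : ℕ → ℝ → ℝ≥0∞ :=
    fun n => (Bset g x).indicator (fun v => ff g x ((⌈v * 2^n⌉ : ℤ) / 2^n)) with hφ
  have hφmeas : ∀ n, Measurable (φ n) := by
    intro n
    refine Measurable.indicator ?_ hBmeas
    have heq : (fun v : ℝ => ff g x ((⌈v * 2^n⌉ : ℤ) / 2^n))
        = (fun k : ℤ => ff g x ((k : ℝ) / 2^n)) ∘ (fun v : ℝ => ⌈v * (2:ℝ)^n⌉) := rfl
    rw [heq]
    exact measurable_from_top.comp (Int.measurable_ceil.comp (measurable_id.mul_const _))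
  refine ENNReal.measurable_of_tendsto hφmeas ?_
  rw [tendsto_pi_nhds]
  intro u
  by_cases hu : u ∈ Bset g x
  · have hgoodu : good g x u := ⟨hu.1.le, hu.2⟩
    have hfrc := ff_rc hg hx hgoodu
    have hq : Tendsto (fun n : ℕ => ((⌈u * 2^n⌉ : ℤ) : ℝ) / 2^n) atTop (𝓝[≥] u) := by
      have hle : ∀ n : ℕ, u ≤ ((⌈u * 2^n⌉ : ℤ) : ℝ) / 2^n := by
        intro n
        rw [le_div_iff₀ (by positivity)]
        exact Int.le_ceil _
      have hub : ∀ n : ℕ, ((⌈u * 2^n⌉ : ℤ) : ℝ) / 2^n ≤ u + (1/2)^n := by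
        intro n
        rw [div_le_iff₀ (by positivity)]
        have := (Int.ceil_lt_add_one (u * 2^n)).le
        calc ((⌈u * 2^n⌉ : ℤ) : ℝ) ≤ u * 2^n + 1 := this
          _ = (u + (1/2)^n) * 2^n := by
              rw [add_mul, ← mul_pow, one_div, inv_mul_cancel₀ (two_ne_zero' ℝ), one_pow]
      refine tendsto_nhdsWithin_of_tendsto_nhds_of_eventually_within _ ?_
        (Eventually.of_forall fun n => hle n)
      have h2 : Tendsto (fun n : ℕ => u + (1/2:ℝ)^n) atTop (𝓝 (u + 0)) :=
        tendsto_const_nhds.add (tendsto_pow_atTop_nhds_zero_of_lt_one (by norm_num) (by norm_num))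
      rw [add_zero] at h2
      exact tendsto_of_tendsto_of_tendsto_of_le_of_le tendsto_const_nhds h2 hle hub
    have : Tendsto (fun n : ℕ => ff g x ((⌈u * 2^n⌉ : ℤ) / 2^n)) atTop (𝓝 (ff g x u)) :=
      hfrc.comp hq
    simp only [hφ, indicator_of_mem hu]
    exact this
  · simp only [hφ, indicator_of_notMem hu]
    exact tendsto_const_nhds

lemma setLIntegral_ff_congr {s : Set ℝ} (hs : MeasurableSet s) (hsub : s ⊆ Bset g x) :
    ∫⁻ u in s, ff g x u = ∫⁻ u in s, (Bset g x).indicator (ff g x) u :=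
  setLIntegral_congr_fun hs (fun u hu => (indicator_of_mem (hsub hu) _).symm)
lemma Ag_eq {s : ℝ} (h0 : 0 ≤ s) (hT : ENNReal.ofReal s ≤ TT g x) :
    Ag g x s = ∫⁻ u in Ioo (0:ℝ) s, ff g x u := if_pos ⟨h0, hT⟩

lemma Ag_top' {s : ℝ} (h : ¬(0 ≤ s ∧ ENNReal.ofReal s ≤ TT g x)) : Ag g x s = ⊤ := if_neg h

lemma Ag_zero : Ag g x 0 = 0 := by
  rw [Ag_eq le_rfl (by simp), Set.Ioo_self, Measure.restrict_empty, lintegral_zero_measure]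

lemma Ioo_subset_Bset {s : ℝ} (hT : ENNReal.ofReal s ≤ TT g x) :
    Ioo (0:ℝ) s ⊆ Bset g x := by
  intro u hu
  refine ⟨hu.1, lt_of_lt_of_le ?_ hT⟩
  exact (ENNReal.ofReal_lt_ofReal_iff (lt_trans hu.1 hu.2)).2 hu.2

lemma Ag_mono {s s' : ℝ} (h0 : 0 ≤ s) (hss : s ≤ s') : Ag g x s ≤ Ag g x s' := by
  by_cases hc : 0 ≤ s' ∧ ENNReal.ofReal s' ≤ TT g x
  · rw [Ag_eq h0 (le_trans (ENNReal.ofReal_le_ofReal hss) hc.2), Ag_eq hc.1 hc.2]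
    exact lintegral_mono' (Measure.restrict_mono (Ioo_subset_Ioo le_rfl hss) le_rfl) le_rfl
  · rw [Ag_top' hc]; exact le_top

lemma Ag_strict (hg : Czero g) (hx : IsDexp x) {s s' : ℝ} (h0 : 0 ≤ s) (hss : s < s')
    (hT : ENNReal.ofReal s' ≤ TT g x) (hfin : Ag g x s ≠ ⊤) : Ag g x s < Ag g x s' := by
  have hs' : 0 ≤ s' := le_trans h0 hss.le
  have hTs : ENNReal.ofReal s ≤ TT g x := le_trans (ENNReal.ofReal_le_ofReal hss.le) hT
  rw [Ag_eq h0 hTs] at hfin ⊢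
  rw [Ag_eq hs' hT]
  have hsub : Ioo 0 s ∪ Ioo s s' ⊆ Ioo 0 s' :=
    union_subset (Ioo_subset_Ioo le_rfl hss.le) (Ioo_subset_Ioo h0 le_rfl)
  have hdisj : Disjoint (Ioo (0:ℝ) s) (Ioo s s') := by
    refine Set.disjoint_left.2 fun u hu hu' => ?_
    exact absurd hu.2 (not_lt.2 hu'.1.le)
  have hunion : ∫⁻ u in Ioo 0 s ∪ Ioo s s', ff g x u
      = (∫⁻ u in Ioo 0 s, ff g x u) + ∫⁻ u in Ioo s s', ff g x u :=
    lintegral_union measurableSet_Ioo hdisj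
  have hpos : 0 < ∫⁻ u in Ioo s s', ff g x u := by
    by_contra hzero
    push_neg at hzero
    have hz : ∫⁻ u in Ioo s s', ff g x u = 0 := le_antisymm hzero (zero_le)
    have hsubB : Ioo s s' ⊆ Bset g x := fun u hu =>
      Ioo_subset_Bset hT ⟨lt_of_le_of_lt h0 hu.1, hu.2⟩
    rw [setLIntegral_ff_congr measurableSet_Ioo hsubB] at hz
    rw [lintegral_eq_zero_iff (measurable_ffB hg hx)] at hz
    have hae := (ae_restrict_iff' measurableSet_Ioo).1 hz
    rw [ae_iff] at hae
    have hIoosub : Ioo s s' ⊆ {u : ℝ | ¬(u ∈ Ioo s s' →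
        (Bset g x).indicator (ff g x) u = (0 : ℝ → ℝ≥0∞) u)} := by
      intro u hu
      simp only [mem_setOf_eq, not_forall]
      refine ⟨hu, ?_⟩
      rw [indicator_of_mem (hsubB hu)]
      exact (ff_pos u).ne'
    have hvol : volume (Ioo s s') = 0 := measure_mono_null hIoosub hae
    rw [Real.volume_Ioo] at hvol
    have := ENNReal.ofReal_eq_zero.1 hvol
    linarith
  calc ∫⁻ u in Ioo 0 s, ff g x u
      < (∫⁻ u in Ioo 0 s, ff g x u) + ∫⁻ u in Ioo s s', ff g x u :=
        ENNReal.lt_add_right hfin hpos.ne'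
    _ = ∫⁻ u in Ioo 0 s ∪ Ioo s s', ff g x u := hunion.symm
    _ ≤ ∫⁻ u in Ioo 0 s', ff g x u :=
        lintegral_mono' (Measure.restrict_mono hsub le_rfl) le_rfl

lemma Ag_le_bound (hg : Czero g) (hx : IsDexp x) {b : ℝ} (hb : good g x b) :
    ∃ M : ℝ≥0∞, M ≠ ⊤ ∧ ∀ s s', 0 ≤ s → s ≤ s' → s' ≤ b →
      Ag g x s' ≤ Ag g x s + M * ENNReal.ofReal (s' - s) := by
  obtain ⟨ε, hε, hbd⟩ := lowerBound hg hx hb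
  refine ⟨(ENNReal.ofReal ε)⁻¹, by simp [ENNReal.inv_ne_top, (ENNReal.ofReal_pos.2 hε).ne'], ?_⟩
  intro s s' h0 hss hs'b
  have h0' : 0 ≤ s' := le_trans h0 hss
  have hgs' : good g x s' := good_mono hb h0' hs'b
  rw [Ag_eq h0' hgs'.2.le, Ag_eq h0 (le_trans (ENNReal.ofReal_le_ofReal hss) hgs'.2.le)]
  have hsub : Ioo 0 s' ⊆ Ioo 0 s ∪ Ico s s' := by
    intro u hu
    rcases lt_or_ge u s with h | h
    · exact Or.inl ⟨hu.1, h⟩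
    · exact Or.inr ⟨h, hu.2⟩
  have hdisj : Disjoint (Ioo (0:ℝ) s) (Ico s s') := by
    refine Set.disjoint_left.2 fun u hu hu' => ?_
    exact absurd hu.2 (not_lt.2 hu'.1)
  calc ∫⁻ u in Ioo 0 s', ff g x u
      ≤ ∫⁻ u in Ioo 0 s ∪ Ico s s', ff g x u :=
        lintegral_mono' (Measure.restrict_mono hsub le_rfl) le_rfl
    _ = (∫⁻ u in Ioo 0 s, ff g x u) + ∫⁻ u in Ico s s', ff g x u :=
        lintegral_union measurableSet_Ico hdisj
    _ ≤ (∫⁻ u in Ioo 0 s, ff g x u) + (ENNReal.ofReal ε)⁻¹ * ENNReal.ofReal (s' - s) := by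
        gcongr
        have hptw : ∀ᵐ u ∂(volume.restrict (Ico s s')),
            ff g x u ≤ (ENNReal.ofReal ε)⁻¹ := by
          rw [ae_restrict_iff' measurableSet_Ico]
          refine ae_of_all _ fun u hu => ?_
          have : ε ≤ gOP g (x u) := hbd u (le_trans h0 hu.1) (le_trans hu.2.le hs'b)
          exact ENNReal.inv_le_inv' (ENNReal.ofReal_le_ofReal this)
        calc ∫⁻ u in Ico s s', ff g x u
            ≤ ∫⁻ _ in Ico s s', (ENNReal.ofReal ε)⁻¹ := lintegral_mono_ae hptw
          _ = (ENNReal.ofReal ε)⁻¹ * volume (Ico s s') := setLIntegral_const _ _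
          _ = (ENNReal.ofReal ε)⁻¹ * ENNReal.ofReal (s' - s) := by rw [Real.volume_Ico]

lemma Ag_fin (hg : Czero g) (hx : IsDexp x) {s : ℝ} (h : good g x s) : Ag g x s ≠ ⊤ := by
  obtain ⟨M, hM, hb⟩ := Ag_le_bound hg hx h
  have := hb 0 s le_rfl h.1 le_rfl
  rw [Ag_zero, zero_add] at this
  exact ne_top_of_le_ne_top (ENNReal.mul_ne_top hM ENNReal.ofReal_ne_top) this
lemma Ag_contOn (hg : Czero g) (hx : IsDexp x) {b : ℝ} (hb : good g x b) :
    ContinuousOn (Ag g x) (Icc 0 b) := by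
  obtain ⟨M, hMt, hM⟩ := Ag_le_bound hg hx hb
  have hfin : ∀ s ∈ Icc (0:ℝ) b, Ag g x s ≠ ⊤ := by
    intro s hs
    exact Ag_fin hg hx (good_mono hb hs.1 hs.2)
  intro s₀ hs₀
  rw [ContinuousWithinAt, ENNReal.tendsto_nhds (hfin s₀ hs₀)]
  intro ε hε
  obtain ⟨δ, hδpos, hδ⟩ : ∃ δ > (0:ℝ), M * ENNReal.ofReal δ ≤ ε := by
    rcases eq_or_ne ε ⊤ with he | he
    · exact ⟨1, one_pos, by rw [he]; exact le_top⟩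
    rcases eq_or_ne M 0 with h0 | h0
    · exact ⟨1, one_pos, by simp [h0]⟩
    refine ⟨(ε / M).toReal, ?_, ?_⟩
    · refine ENNReal.toReal_pos ?_ ?_
      · exact (ENNReal.div_pos hε.ne' hMt).ne'
      · exact (ENNReal.div_lt_top he h0).ne
    · rw [ENNReal.ofReal_toReal ((ENNReal.div_lt_top he h0).ne)]
      exact ENNReal.mul_div_le
  have h1 : ∀ᶠ s in 𝓝 s₀, |s - s₀| < δ := by
    have := Metric.ball_mem_nhds s₀ hδpos
    filter_upwards [this] with s hs
    simpa [Real.dist_eq] using hs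
  filter_upwards [h1.filter_mono nhdsWithin_le_nhds, self_mem_nhdsWithin] with s hs hsIcc
  have hbound : ∀ u v : ℝ, u ∈ Icc (0:ℝ) b → v ∈ Icc (0:ℝ) b → u ≤ v → v - u ≤ δ →
      Ag g x v ≤ Ag g x u + ε := by
    intro u v hu hv huv hd
    calc Ag g x v ≤ Ag g x u + M * ENNReal.ofReal (v - u) := hM u v hu.1 huv hv.2
      _ ≤ Ag g x u + M * ENNReal.ofReal δ := by gcongr
      _ ≤ Ag g x u + ε := by gcongr
  constructor
  · rw [tsub_le_iff_right]
    rcases le_or_gt s₀ s with h | h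
    · exact le_trans (Ag_mono hs₀.1 h) le_self_add
    · exact hbound s s₀ hsIcc hs₀ h.le (by rw [abs_sub_lt_iff] at hs; linarith [hs.2])
  · rcases le_or_gt s s₀ with h | h
    · exact le_trans (Ag_mono hsIcc.1 h) le_self_add
    · exact hbound s₀ s hs₀ hsIcc h.le (by rw [abs_sub_lt_iff] at hs; linarith [hs.1])

lemma Atotal_eq_Bset : Atotal g x = ∫⁻ u in Bset g x, ff g x u := by
  rcases eq_or_ne (TT g x) ⊤ with ht | ht
  · have hset : {u : ℝ | 0 < u ∧ ENNReal.ofReal u ≤ tauU {a : S | g a ≠ 0} x}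
        = Ioi (0:ℝ) := by
      ext u
      simp only [mem_setOf_eq, mem_Ioi]
      constructor
      · exact fun h => h.1
      · intro h
        refine ⟨h, ?_⟩
        have hTT : tauU {a : S | g a ≠ 0} x = TT g x := rfl
        rw [hTT, ht]; exact le_top
    rw [Bset_eq_top ht]
    unfold Atotal
    rw [hset]
    rfl
  · rw [Bset_eq ht]
    unfold Atotal
    have hset : {u : ℝ | 0 < u ∧ ENNReal.ofReal u ≤ tauU {a : S | g a ≠ 0} x}
        = Ioc 0 (TT g x).toReal := by
      ext u
      simp only [mem_setOf_eq, mem_Ioc]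
      constructor
      · rintro ⟨h1, h2⟩; exact ⟨h1, (ENNReal.ofReal_le_iff_le_toReal ht).1 h2⟩
      · rintro ⟨h1, h2⟩; exact ⟨h1, (ENNReal.ofReal_le_iff_le_toReal ht).2 h2⟩
    rw [hset]
    exact (setLIntegral_congr (Ioo_ae_eq_Ioc (a := (0:ℝ)) (b := (TT g x).toReal))).symm

lemma Ag_toReal_eq_Atotal (ht : TT g x ≠ ⊤) : Ag g x (TT g x).toReal = Atotal g x := by
  rw [Ag_eq ENNReal.toReal_nonneg (by rw [ENNReal.ofReal_toReal ht]), Atotal_eq_Bset,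
    Bset_eq ht]

lemma Ag_le_Atotal {s : ℝ} (h0 : 0 ≤ s) (hT : ENNReal.ofReal s ≤ TT g x) :
    Ag g x s ≤ Atotal g x := by
  rw [Ag_eq h0 hT, Atotal_eq_Bset]
  exact lintegral_mono' (Measure.restrict_mono (Ioo_subset_Bset hT) le_rfl) le_rfl

lemma Ag_lt_Atotal (hg : Czero g) (hx : IsDexp x) {s : ℝ} (h : good g x s) :
    Ag g x s < Atotal g x := by
  have hfin : Ag g x s ≠ ⊤ := Ag_fin hg hx h
  rcases eq_or_ne (TT g x) ⊤ with ht | ht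
  · have h1 : Ag g x s < Ag g x (s + 1) :=
      Ag_strict hg hx h.1 (lt_add_one s) (by rw [ht]; exact le_top) hfin
    exact lt_of_lt_of_le h1 (Ag_le_Atotal (by linarith [h.1]) (by rw [ht]; exact le_top))
  · rw [← Ag_toReal_eq_Atotal ht]
    refine Ag_strict hg hx h.1 ?_ (by rw [ENNReal.ofReal_toReal ht]) hfin
    exact (ENNReal.ofReal_lt_iff_lt_toReal h.1 ht).1 h.2

lemma Atotal_le_iSup (hg : Czero g) (hx : IsDexp x) (sn : ℕ → ℝ)
    (hgood : ∀ n, good g x (sn n)) (hmono : Monotone sn)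
    (hcover : ∀ u ∈ Bset g x, ∃ n, u < sn n) :
    Atotal g x ≤ ⨆ n, Ag g x (sn n) := by
  have hΦ := measurable_ffB hg hx
  have h1 : Atotal g x = ∫⁻ u, (Bset g x).indicator (ff g x) u := by
    rw [Atotal_eq_Bset, ← lintegral_indicator measurableSet_Bset]
  have h2 : ∀ n, Ag g x (sn n) = ∫⁻ u, (Ioo 0 (sn n)).indicator
      ((Bset g x).indicator (ff g x)) u := by
    intro n
    rw [Ag_eq (hgood n).1 (hgood n).2.le, lintegral_indicator measurableSet_Ioo,
      ← setLIntegral_ff_congr measurableSet_Ioo (Ioo_subset_Bset (hgood n).2.le)]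
  have hptw : ∀ u, (Bset g x).indicator (ff g x) u
      = ⨆ n, (Ioo 0 (sn n)).indicator ((Bset g x).indicator (ff g x)) u := by
    intro u
    refine le_antisymm ?_ (iSup_le fun n =>
      Set.indicator_le_self' (fun _ _ => zero_le) u)
    by_cases hu : u ∈ Bset g x
    · obtain ⟨n, hn⟩ := hcover u hu
      refine le_iSup_of_le n ?_
      rw [indicator_of_mem (show u ∈ Ioo 0 (sn n) from ⟨hu.1, hn⟩)]
    · rw [indicator_of_notMem hu]; exact zero_le
  refine le_of_eq ?_
  calc Atotal g x = ∫⁻ u, ⨆ n, (Ioo 0 (sn n)).indicator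
        ((Bset g x).indicator (ff g x)) u := by
        rw [h1]; exact lintegral_congr hptw
    _ = ⨆ n, ∫⁻ u, (Ioo 0 (sn n)).indicator ((Bset g x).indicator (ff g x)) u := by
        refine lintegral_iSup (fun n => hΦ.indicator measurableSet_Ioo) ?_
        intro n m hnm
        intro u
        dsimp only
        by_cases hu : u ∈ Ioo 0 (sn n)
        · rw [indicator_of_mem hu,
            indicator_of_mem (Ioo_subset_Ioo le_rfl (hmono hnm) hu)]
        · rw [indicator_of_notMem hu]; exact zero_le
    _ = ⨆ n, Ag g x (sn n) := iSup_congr fun n => (h2 n).symm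

lemma exists_good_Ag_gt (hg : Czero g) (hx : IsDexp x) {r : ℝ≥0∞} (hr : r < Atotal g x) :
    ∃ s, good g x s ∧ r < Ag g x s := by
  rcases eq_or_ne (TT g x) ⊤ with ht | ht
  · have hgood : ∀ n : ℕ, good g x n := fun n =>
      ⟨Nat.cast_nonneg n, by rw [ht]; exact ENNReal.ofReal_lt_top⟩
    have hkey := Atotal_le_iSup hg hx (fun n : ℕ => (n:ℝ)) hgood
      (fun n m h => by exact Nat.cast_le.2 h) ?_
    · obtain ⟨n, hn⟩ := lt_iSup_iff.1 (lt_of_lt_of_le hr hkey)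
      exact ⟨n, hgood n, hn⟩
    · intro u _
      obtain ⟨n, hn⟩ := exists_nat_gt u
      exact ⟨n, hn⟩
  · have hTr0 : 0 ≤ (TT g x).toReal := ENNReal.toReal_nonneg
    rcases eq_or_lt_of_le hTr0 with h0 | h0
    · exfalso
      have hz : Atotal g x = 0 := by
        rw [← Ag_toReal_eq_Atotal ht, ← h0, Ag_zero]
      rw [hz] at hr
      exact absurd hr (not_lt.2 (zero_le))
    · set Tr := (TT g x).toReal
      have hgood : ∀ n : ℕ, good g x (Tr - Tr / (n+1)) := by
        intro n
        have h1 : 0 < Tr / ((n:ℝ) + 1) := by positivity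
        have h2 : Tr / ((n:ℝ)+1) ≤ Tr := by
          rw [div_le_iff₀ (by positivity)]
          nlinarith
        refine ⟨by linarith, ?_⟩
        have h3 : Tr - Tr / ((n:ℝ)+1) < Tr := by linarith
        calc ENNReal.ofReal (Tr - Tr / ((n:ℝ)+1)) < ENNReal.ofReal Tr := by
              rw [ENNReal.ofReal_lt_ofReal_iff h0]; exact h3
          _ = TT g x := ENNReal.ofReal_toReal ht
      have hmono : Monotone (fun n : ℕ => Tr - Tr / (n+1)) := by
        intro n m hnm
        dsimp only
        have h4 : Tr / ((m:ℝ)+1) ≤ Tr / ((n:ℝ)+1) := by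
          apply div_le_div_of_nonneg_left h0.le (by positivity)
          have : (n:ℝ) ≤ m := Nat.cast_le.2 hnm
          linarith
        linarith
      have hcover : ∀ u ∈ Bset g x, ∃ n : ℕ, u < Tr - Tr / ((n:ℝ)+1) := by
        intro u hu
        rw [Bset_eq ht] at hu
        have hult : u < Tr := hu.2
        have hpos : 0 < Tr - u := by linarith
        obtain ⟨n, hn⟩ := exists_nat_gt (Tr / (Tr - u))
        refine ⟨n, ?_⟩
        have h5 : Tr / ((n:ℝ) + 1) < Tr - u := by
          rw [div_lt_iff₀ (by positivity)]
          have h3 : Tr / (Tr - u) < (n:ℝ) + 1 := by linarith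
          calc Tr = (Tr / (Tr - u)) * (Tr - u) := by field_simp
            _ < ((n:ℝ) + 1) * (Tr - u) := mul_lt_mul_of_pos_right h3 hpos
            _ = (Tr - u) * ((n:ℝ) + 1) := by ring
        linarith
      have hkey := Atotal_le_iSup hg hx _ hgood hmono hcover
      obtain ⟨n, hn⟩ := lt_iSup_iff.1 (lt_of_lt_of_le hr hkey)
      exact ⟨_, hgood n, hn⟩

lemma exists_good_Ag_eq (hg : Czero g) (hx : IsDexp x) {t : ℝ} (h0 : 0 ≤ t)
    (ht : ENNReal.ofReal t < Atotal g x) :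
    ∃ s, good g x s ∧ Ag g x s = ENNReal.ofReal t := by
  obtain ⟨b, hbgood, hbr⟩ := exists_good_Ag_gt hg hx ht
  have hcont := Ag_contOn hg hx hbgood
  have hmem : ENNReal.ofReal t ∈ Icc (Ag g x 0) (Ag g x b) := by
    rw [Ag_zero]
    exact ⟨zero_le, hbr.le⟩
  obtain ⟨s, hs, hseq⟩ := intermediate_value_Icc hbgood.1 hcont hmem
  exact ⟨s, good_mono hbgood hs.1 hs.2, hseq⟩

lemma Ag_inj (hg : Czero g) (hx : IsDexp x) {s s' : ℝ} (h : good g x s) (h' : good g x s')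
    (he : Ag g x s = Ag g x s') : s = s' := by
  rcases lt_trichotomy s s' with hlt | heq | hgt
  · exact absurd he (Ag_strict hg hx h.1 hlt h'.2.le (Ag_fin hg hx h)).ne
  · exact heq
  · exact absurd he.symm (Ag_strict hg hx h'.1 hgt h.2.le (Ag_fin hg hx h')).ne

lemma Ag_lt_imp {s s' : ℝ} (h0' : 0 ≤ s') (hlt : Ag g x s < Ag g x s') : s < s' := by
  by_contra hc
  push_neg at hc
  exact absurd (Ag_mono h0' hc) (not_le.2 hlt)

lemma taug_eval (hg : Czero g) (hx : IsDexp x) {t s : ℝ} (h : good g x s)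
    (hA : Ag g x s = ENNReal.ofReal t) :
    taug g x (ENNReal.ofReal t) = ENNReal.ofReal s := by
  refine le_antisymm (iInf₂_le s ⟨h.1, hA.ge⟩) ?_
  refine le_iInf₂ fun s' hs' => ?_
  refine ENNReal.ofReal_le_ofReal ?_
  by_contra hc
  push_neg at hc
  have hgood' : good g x s' := good_mono h hs'.1 hc.le
  have := Ag_strict hg hx hs'.1 hc h.2.le (Ag_fin hg hx hgood')
  rw [hA] at this
  exact absurd hs'.2 (not_le.2 this)

lemma taug_zero : taug g x 0 = 0 := by
  refine le_antisymm ?_ (zero_le)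
  have h0m : (0:ℝ) ∈ {s : ℝ | 0 ≤ s ∧ (0:ℝ≥0∞) ≤ Ag g x s} := ⟨le_rfl, zero_le⟩
  calc taug g x 0 ≤ ENNReal.ofReal 0 := iInf₂_le 0 h0m
    _ = 0 := by simp

lemma taug_after (hg : Czero g) (hx : IsDexp x) {t : ℝ} (ht : TT g x ≠ ⊤)
    (htot : Atotal g x ≤ ENNReal.ofReal t) :
    taug g x (ENNReal.ofReal t) = TT g x := by
  have hTr0 : 0 ≤ (TT g x).toReal := ENNReal.toReal_nonneg
  refine le_antisymm ?_ ?_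
  · refine ENNReal.le_of_forall_pos_le_add fun ε hε _ => ?_
    have hmem : (TT g x).toReal + (ε:ℝ) ∈ {s : ℝ | 0 ≤ s ∧ ENNReal.ofReal t ≤ Ag g x s} := by
      refine ⟨by positivity, ?_⟩
      have hA : Ag g x ((TT g x).toReal + (ε:ℝ)) = ⊤ := by
        refine Ag_top' ?_
        rintro ⟨-, habs⟩
        rw [ENNReal.ofReal_add hTr0 ε.coe_nonneg, ENNReal.ofReal_toReal ht,
          ENNReal.ofReal_coe_nnreal] at habs
        have : TT g x < TT g x + ε :=
          ENNReal.lt_add_right ht (by exact_mod_cast hε.ne')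
        exact absurd habs (not_le.2 this)
      rw [hA]; exact le_top
    calc taug g x (ENNReal.ofReal t) ≤ ENNReal.ofReal ((TT g x).toReal + (ε:ℝ)) :=
          iInf₂_le _ hmem
      _ = TT g x + (ε : ℝ≥0∞) := by
          rw [ENNReal.ofReal_add hTr0 ε.coe_nonneg, ENNReal.ofReal_toReal ht,
            ENNReal.ofReal_coe_nnreal]
  · refine le_iInf₂ fun s' hs' => ?_
    by_contra hc
    push_neg at hc
    have hgood' : good g x s' := ⟨hs'.1, hc⟩
    exact absurd hs'.2 (not_le.2 (lt_of_lt_of_le (Ag_lt_Atotal hg hx hgood') htot))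

lemma taug_after_top (hg : Czero g) (hx : IsDexp x) {t : ℝ} (ht : TT g x = ⊤)
    (htot : Atotal g x ≤ ENNReal.ofReal t) :
    taug g x (ENNReal.ofReal t) = ⊤ := by
  rw [eq_top_iff]
  refine le_iInf₂ fun s' hs' => ?_
  have hgood' : good g x s' := ⟨hs'.1, by rw [ht]; exact ENNReal.ofReal_lt_top⟩
  exact absurd hs'.2 (not_le.2 (lt_of_lt_of_le (Ag_lt_Atotal hg hx hgood') htot))

lemma evalE_ofReal {s : ℝ} (h0 : 0 ≤ s) : evalE x (ENNReal.ofReal s) = x s := by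
  unfold evalE
  rw [if_neg ENNReal.ofReal_ne_top, ENNReal.toReal_ofReal h0]

lemma evalE_top : evalE x (⊤ : ℝ≥0∞) = OnePoint.infty := if_pos rfl

lemma leftFilter_neBot (t : ℝ≥0∞) : (leftFilter t).NeBot := by
  unfold leftFilter
  split <;> infer_instance

open Classical in
/-- The terminal value of the time-changed path. -/
noncomputable def cc (g : S → ℝ) (x : Path S) : OnePoint S :=
  if _ : ∃ a : S, g a = 0 ∧ Tendsto x (leftFilter (TT g x)) (𝓝 (a : OnePoint S))
  then leftLimValE x (TT g x)
  else if TT g x ≠ ⊤ then x (TT g x).toReal else OnePoint.infty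

lemma leftLimValE_eq {a : S} (hten : Tendsto x (leftFilter (TT g x)) (𝓝 (a : OnePoint S))) :
    leftLimValE x (TT g x) = (a : OnePoint S) := by
  have hne := leftFilter_neBot (TT g x)
  unfold leftLimValE
  rw [dif_pos ⟨(a : OnePoint S), hten⟩]
  exact tendsto_nhds_unique (Exists.choose_spec (⟨(a : OnePoint S), hten⟩ :
    ∃ b : OnePoint S, Tendsto x (leftFilter (TT g x)) (𝓝 b))) hten

lemma Y1 (hg : Czero g) (hx : IsDexp x) {t : ℝ} (h0 : 0 ≤ t)
    (ht : ENNReal.ofReal t < Atotal g x) :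
    ∃ s, good g x s ∧ Ag g x s = ENNReal.ofReal t ∧ timeChange g x t = x s := by
  obtain ⟨s, hs, hA⟩ := exists_good_Ag_eq hg hx h0 ht
  refine ⟨s, hs, hA, ?_⟩
  unfold timeChange
  rw [if_neg, taug_eval hg hx hs hA, evalE_ofReal hs.1]
  rintro ⟨-, habs, -⟩
  exact absurd (lt_of_lt_of_le ht habs) (lt_irrefl _)

lemma Y2 (hg : Czero g) (hx : IsDexp x) {t : ℝ} (h0 : 0 ≤ t)
    (htot : Atotal g x ≤ ENNReal.ofReal t) :
    timeChange g x t = cc g x := by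
  unfold timeChange cc
  by_cases hB : ∃ a : S, g a = 0 ∧ Tendsto x (leftFilter (TT g x)) (𝓝 (a : OnePoint S))
  · rw [if_pos ⟨h0, htot, hB⟩, dif_pos hB]
    rfl
  · rw [if_neg (by rintro ⟨-, -, h⟩; exact hB h), dif_neg hB]
    rcases eq_or_ne (TT g x) ⊤ with ht | ht
    · rw [taug_after_top hg hx ht htot, evalE_top, if_neg (by simp [ht])]
    · rw [taug_after hg hx ht htot, if_pos ht]
      unfold evalE
      rw [if_neg ht]

lemma Atotal_pos_TT (hg : Czero g) (hx : IsDexp x) (h : Atotal g x = 0) :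
    TT g x ≠ ⊤ ∧ (TT g x).toReal = 0 := by
  have key : ∀ s : ℝ, 0 < s → ENNReal.ofReal s ≤ TT g x → False := by
    intro s hs hsT
    have h1 : Ag g x 0 < Ag g x s :=
      Ag_strict hg hx le_rfl hs hsT (by rw [Ag_zero]; exact ENNReal.zero_ne_top)
    rw [Ag_zero] at h1
    have h2 : Ag g x s ≤ Atotal g x := Ag_le_Atotal hs.le hsT
    rw [h] at h2
    exact absurd (lt_of_lt_of_le h1 h2) (lt_irrefl _)
  constructor
  · intro htop
    exact key 1 one_pos (by rw [htop]; exact le_top)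
  · by_contra hc
    have h0 : 0 < (TT g x).toReal := lt_of_le_of_ne ENNReal.toReal_nonneg (Ne.symm hc)
    have ht : TT g x ≠ ⊤ := by
      intro htop
      exact key 1 one_pos (by rw [htop]; exact le_top)
    refine key ((TT g x).toReal / 2) (by linarith) ?_
    calc ENNReal.ofReal ((TT g x).toReal / 2)
        ≤ ENNReal.ofReal ((TT g x).toReal) := ENNReal.ofReal_le_ofReal (by linarith)
      _ = TT g x := ENNReal.ofReal_toReal ht

lemma Y3 (hg : Czero g) (hx : IsDexp x) {t : ℝ} (ht : t ≤ 0) :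
    timeChange g x t = x 0 := by
  have hofR : ENNReal.ofReal t = 0 := ENNReal.ofReal_eq_zero.2 ht
  have heval : evalE x (taug g x (ENNReal.ofReal t)) = x 0 := by
    rw [hofR, taug_zero, show (0:ℝ≥0∞) = ENNReal.ofReal 0 by simp, evalE_ofReal le_rfl]
  rcases lt_or_eq_of_le ht with htlt | hteq
  · unfold timeChange
    rw [if_neg (by rintro ⟨h0, -⟩; exact absurd h0 (not_le.2 htlt))]
    exact heval
  · unfold timeChange
    by_cases hB : 0 ≤ t ∧ Atotal g x ≤ ENNReal.ofReal t ∧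
        ∃ a : S, g a = 0 ∧ Tendsto x (leftFilter (tauU {b : S | g b ≠ 0} x))
          (𝓝 (a : OnePoint S))
    · rw [if_pos hB]
      obtain ⟨-, htot, a, ha0, hten⟩ := hB
      rw [hofR] at htot
      have htot0 : Atotal g x = 0 := le_antisymm htot (zero_le)
      obtain ⟨hTTne, hTr0⟩ := Atotal_pos_TT hg hx htot0
      have hLF : leftFilter (TT g x) = 𝓝[<] (0:ℝ) := by
        unfold leftFilter
        rw [if_neg hTTne, hTr0]
      have hxconst : Tendsto x (𝓝[<] (0:ℝ)) (𝓝 (x 0)) := by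
        have hev : ∀ᶠ s in 𝓝[<] (0:ℝ), x s = x 0 := by
          filter_upwards [self_mem_nhdsWithin] with s hs
          exact hx.1 s (le_of_lt hs)
        exact Tendsto.congr' (hev.mono fun s hs => hs.symm) tendsto_const_nhds
      have hten' : Tendsto x (leftFilter (TT g x)) (𝓝 (a : OnePoint S)) := hten
      rw [hLF] at hten'
      have hne : (𝓝[<] (0:ℝ)).NeBot := inferInstance
      have hax : (a : OnePoint S) = x 0 := tendsto_nhds_unique hten' hxconst
      have : leftLimValE x (tauU {b : S | g b ≠ 0} x) = leftLimValE x (TT g x) := rfl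
      rw [this, leftLimValE_eq hten, hax]
    · rw [if_neg hB]
      exact heval

lemma W1 (hg : Czero g) (hx : IsDexp x) {t : ℝ} (h0 : 0 ≤ t)
    (ht : ENNReal.ofReal t < Atotal g x) :
    Tendsto (timeChange g x) (𝓝[>] t) (𝓝 (timeChange g x t)) := by
  obtain ⟨s, hs, hA, hy⟩ := Y1 hg hx h0 ht
  rw [hy]
  obtain ⟨d', hd'good, hsd'⟩ : ∃ d', good g x d' ∧ s < d' := by
    rcases eq_or_ne (TT g x) ⊤ with htT | htT
    · exact ⟨s + 1, ⟨by linarith [hs.1], by rw [htT]; exact ENNReal.ofReal_lt_top⟩,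
        lt_add_one s⟩
    · have hsTr : s < (TT g x).toReal := (ENNReal.ofReal_lt_iff_lt_toReal hs.1 htT).1 hs.2
      have hTrpos : 0 < (TT g x).toReal := lt_of_le_of_lt hs.1 hsTr
      refine ⟨(s + (TT g x).toReal)/2, ⟨by linarith [hs.1], ?_⟩, by linarith⟩
      have hlt : (s + (TT g x).toReal)/2 < (TT g x).toReal := by linarith
      calc ENNReal.ofReal ((s + (TT g x).toReal)/2)
          < ENNReal.ofReal ((TT g x).toReal) :=
            (ENNReal.ofReal_lt_ofReal_iff hTrpos).2 hlt
        _ = TT g x := ENNReal.ofReal_toReal htT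
  rw [Filter.tendsto_def]
  intro V hV
  have hxrc : Tendsto x (𝓝[>] s) (𝓝 (x s)) := hx.2.2.2.1 s hs.1 (xs_ne hs)
  obtain ⟨d, hd, hsub⟩ := mem_nhdsGT_iff_exists_Ioo_subset.1 (hxrc hV)
  have hsd'' : s < min d d' := lt_min hd hsd'
  have hd''good : good g x (min d d') := good_mono hd'good
    (le_trans hs.1 hsd''.le) (min_le_right d d')
  have hAd'' : ENNReal.ofReal t < Ag g x (min d d') := by
    rw [← hA]
    exact Ag_strict hg hx hs.1 hsd'' hd''good.2.le (Ag_fin hg hx hs)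
  have hfin : Ag g x (min d d') ≠ ⊤ := Ag_fin hg hx hd''good
  have htU : t < (Ag g x (min d d')).toReal := by
    by_contra hc
    push_neg at hc
    exact absurd hAd'' (not_lt.2 (by
      rw [← ENNReal.ofReal_toReal hfin]
      exact ENNReal.ofReal_le_ofReal hc))
  refine mem_of_superset (Ioo_mem_nhdsGT_of_mem ⟨le_rfl, htU⟩) ?_
  intro t' ht'
  have h0t' : 0 ≤ t' := le_trans h0 ht'.1.le
  have hlt' : ENNReal.ofReal t' < Atotal g x := by
    have h1 : ENNReal.ofReal t' < Ag g x (min d d') :=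
      (ENNReal.ofReal_lt_iff_lt_toReal h0t' hfin).2 ht'.2
    exact lt_of_lt_of_le h1 (Ag_lt_Atotal hg hx hd''good).le
  obtain ⟨s', hs', hA', hy'⟩ := Y1 hg hx h0t' hlt'
  rw [mem_preimage, hy']
  apply hsub
  constructor
  · refine Ag_lt_imp (g := g) (x := x) hs'.1 ?_
    rw [hA, hA']
    exact (ENNReal.ofReal_lt_ofReal_iff (lt_of_le_of_lt h0 ht'.1)).2 ht'.1
  · have hlt2 : Ag g x s' < Ag g x (min d d') := by
      rw [hA']
      exact (ENNReal.ofReal_lt_iff_lt_toReal h0t' hfin).2 ht'.2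
    exact lt_of_lt_of_le (Ag_lt_imp (le_trans hs.1 hsd''.le) hlt2) (min_le_left d d')

lemma W2 (hg : Czero g) (hx : IsDexp x) {t : ℝ} (h0 : 0 < t)
    (ht : ENNReal.ofReal t < Atotal g x) :
    ∃ a : S, Tendsto (timeChange g x) (𝓝[<] t) (𝓝 (a : OnePoint S)) := by
  obtain ⟨s, hs, hA, hy⟩ := Y1 hg hx h0.le ht
  have hspos : 0 < s := by
    rcases eq_or_lt_of_le hs.1 with h | h
    · exfalso
      rw [← h, Ag_zero] at hA
      exact absurd hA.symm (by simp [ENNReal.ofReal_eq_zero, not_le, h0])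
    · exact h
  obtain ⟨a, hll⟩ := hx.2.2.2.2 s hspos (xs_ne hs)
  refine ⟨a, ?_⟩
  rw [Filter.tendsto_def]
  intro V hV
  obtain ⟨c, hc, hsub⟩ := mem_nhdsLT_iff_exists_Ioo_subset.1 (hll hV)
  have hc's : max c 0 < s := max_lt hc hspos
  have hc'good : good g x (max c 0) := good_mono hs (le_max_right c 0) hc's.le
  have hfinc : Ag g x (max c 0) ≠ ⊤ := Ag_fin hg hx hc'good
  have hAc' : Ag g x (max c 0) < ENNReal.ofReal t := by
    rw [← hA]
    exact Ag_strict hg hx hc'good.1 hc's hs.2.le hfinc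
  have htL : (Ag g x (max c 0)).toReal < t :=
    (ENNReal.lt_ofReal_iff_toReal_lt hfinc).1 hAc'
  refine mem_of_superset (Ioo_mem_nhdsLT_of_mem ⟨htL, le_rfl⟩) ?_
  intro t' ht'
  have h0t' : 0 ≤ t' := le_trans ENNReal.toReal_nonneg ht'.1.le
  have hlt' : ENNReal.ofReal t' < Atotal g x :=
    lt_trans ((ENNReal.ofReal_lt_ofReal_iff h0).2 ht'.2) ht
  obtain ⟨s', hs', hA', hy'⟩ := Y1 hg hx h0t' hlt'
  rw [mem_preimage, hy']
  apply hsub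
  constructor
  · have hlt2 : Ag g x (max c 0) < Ag g x s' := by
      rw [hA']
      exact (ENNReal.lt_ofReal_iff_toReal_lt hfinc).2 ht'.1
    exact lt_of_le_of_lt (le_max_left c 0) (Ag_lt_imp hs'.1 hlt2)
  · refine Ag_lt_imp (g := g) (x := x) hs.1 ?_
    rw [hA', hA]
    exact (ENNReal.ofReal_lt_ofReal_iff h0).2 ht'.2

lemma W3 (hg : Czero g) (hx : IsDexp x) (htotne : Atotal g x ≠ ⊤)
    (ht₀ : 0 < (Atotal g x).toReal) {L : OnePoint S}
    (hL : Tendsto x (leftFilter (TT g x)) (𝓝 L)) :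
    Tendsto (timeChange g x) (𝓝[<] (Atotal g x).toReal) (𝓝 L) := by
  rw [Filter.tendsto_def]
  intro V hV
  have hpre := hL hV
  obtain ⟨c', hc'good, hc'sub⟩ : ∃ c', good g x c' ∧
      ∀ s', good g x s' → c' < s' → x s' ∈ V := by
    rcases eq_or_ne (TT g x) ⊤ with htT | htT
    · rw [show leftFilter (TT g x) = atTop by unfold leftFilter; rw [if_pos htT]] at hpre
      obtain ⟨M, hM⟩ := eventually_atTop.1 hpre
      refine ⟨max M 0, ⟨le_max_right M 0, by rw [htT]; exact ENNReal.ofReal_lt_top⟩, ?_⟩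
      intro s' _ hMs'
      exact hM s' (le_trans (le_max_left M 0) hMs'.le)
    · rw [show leftFilter (TT g x) = 𝓝[<] (TT g x).toReal by
        unfold leftFilter; rw [if_neg htT]] at hpre
      obtain ⟨c, hc, hsub⟩ := mem_nhdsLT_iff_exists_Ioo_subset.1 hpre
      have hTrpos : 0 < (TT g x).toReal := by
        by_contra hc2
        push_neg at hc2
        have hTr0 : (TT g x).toReal = 0 := le_antisymm hc2 ENNReal.toReal_nonneg
        have : Atotal g x = 0 := by
          rw [← Ag_toReal_eq_Atotal htT, hTr0, Ag_zero]
        rw [this] at ht₀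
        simpa using ht₀
      refine ⟨max c 0, ⟨le_max_right c 0, ?_⟩, ?_⟩
      · have hlt : max c 0 < (TT g x).toReal := max_lt hc hTrpos
        calc ENNReal.ofReal (max c 0) < ENNReal.ofReal ((TT g x).toReal) :=
              (ENNReal.ofReal_lt_ofReal_iff hTrpos).2 hlt
          _ = TT g x := ENNReal.ofReal_toReal htT
      · intro s' hs'good hcs'
        refine hsub ⟨lt_of_le_of_lt (le_max_left c 0) hcs', ?_⟩
        exact (ENNReal.ofReal_lt_iff_lt_toReal hs'good.1 htT).1 hs'good.2
  have hfinc : Ag g x c' ≠ ⊤ := Ag_fin hg hx hc'good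
  have htL : (Ag g x c').toReal < (Atotal g x).toReal :=
    (ENNReal.toReal_lt_toReal hfinc htotne).2 (Ag_lt_Atotal hg hx hc'good)
  refine mem_of_superset (Ioo_mem_nhdsLT_of_mem ⟨htL, le_rfl⟩) ?_
  intro t' ht'
  have h0t' : 0 ≤ t' := le_trans ENNReal.toReal_nonneg ht'.1.le
  have hlt' : ENNReal.ofReal t' < Atotal g x :=
    (ENNReal.ofReal_lt_iff_lt_toReal h0t' htotne).2 ht'.2
  obtain ⟨s', hs', hA', hy'⟩ := Y1 hg hx h0t' hlt'
  rw [mem_preimage, hy']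
  refine hc'sub s' hs' ?_
  refine Ag_lt_imp (g := g) (x := x) hs'.1 ?_
  rw [hA']
  exact (ENNReal.lt_ofReal_iff_toReal_lt hfinc).2 ht'.1

lemma tendsto_const_on (f : Path S) {l : Filter ℝ} {c : OnePoint S}
    (h : ∀ᶠ s in l, f s = c) : Tendsto f l (𝓝 c) :=
  Tendsto.congr' (h.mono fun s hs => hs.symm) tendsto_const_nhds

lemma good_zero_of (hAt : Atotal g x ≠ 0) : good g x 0 := by
  refine ⟨le_rfl, ?_⟩
  rw [ENNReal.ofReal_zero]
  rcases eq_or_ne (TT g x) ⊤ with h | h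
  · rw [h]; exact ENNReal.zero_lt_top
  · by_contra hc
    push_neg at hc
    have h0 : TT g x = 0 := le_antisymm hc (zero_le)
    refine hAt ?_
    rw [← Ag_toReal_eq_Atotal h, h0]
    simpa using Ag_zero (g := g) (x := x)

lemma le_ofReal_At {t : ℝ} (htne : Atotal g x ≠ ⊤) (h0 : 0 ≤ t)
    (h : (Atotal g x).toReal ≤ t) : Atotal g x ≤ ENNReal.ofReal t := by
  rw [← ENNReal.ofReal_toReal htne]
  exact ENNReal.ofReal_le_ofReal h

lemma hmap_gen (hg : Czero g) (hx : IsDexp x) :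
    ∀ s, good g x s → timeChange g x ((Ag g x s).toReal) = x s := by
  intro s hs
  have hfin := Ag_fin hg hx hs
  have h0' : (0:ℝ) ≤ (Ag g x s).toReal := ENNReal.toReal_nonneg
  have hofR : ENNReal.ofReal ((Ag g x s).toReal) = Ag g x s := ENNReal.ofReal_toReal hfin
  have hlt : ENNReal.ofReal ((Ag g x s).toReal) < Atotal g x := by
    rw [hofR]; exact Ag_lt_Atotal hg hx hs
  obtain ⟨s₂, hs₂, hA₂, hy₂⟩ := Y1 hg hx h0' hlt
  rw [hy₂, Ag_inj hg hx hs₂ hs (by rw [hA₂, hofR])]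

lemma pack_N (hg : Czero g) (hx : IsDexp x) (hAtne : Atotal g x ≠ ⊤) {ac : S}
    (hcc : cc g x = (ac : OnePoint S))
    (hLex : 0 < (Atotal g x).toReal →
      ∃ aL : S, Tendsto x (leftFilter (TT g x)) (𝓝 (aL : OnePoint S))) :
    (∀ t, timeChange g x t ≠ OnePoint.infty) ∧ IsDexp (timeChange g x) := by
  have hY2' : ∀ t : ℝ, 0 ≤ t → (Atotal g x).toReal ≤ t → timeChange g x t = cc g x :=
    fun t h0 hge => Y2 hg hx h0 (le_ofReal_At hAtne h0 hge)
  have hx0 : x 0 ≠ OnePoint.infty := by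
    rcases eq_or_ne (Atotal g x) 0 with h0 | h0
    · have h1 : timeChange g x 0 = x 0 := Y3 hg hx le_rfl
      have h2 : timeChange g x 0 = cc g x := hY2' 0 le_rfl (by rw [h0]; simp)
      rw [← h1, h2, hcc]
      exact OnePoint.coe_ne_infty ac
    · exact xs_ne (good_zero_of h0)
  have hne : ∀ t, timeChange g x t ≠ OnePoint.infty := by
    intro t
    rcases lt_or_ge t 0 with h | h
    · rw [Y3 hg hx h.le]; exact hx0
    rcases lt_or_ge t (Atotal g x).toReal with h2 | h2
    · obtain ⟨s, hs, -, hyt⟩ := Y1 hg hx h ((ENNReal.ofReal_lt_iff_lt_toReal h hAtne).2 h2)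
      rw [hyt]; exact xs_ne hs
    · rw [hY2' t h h2, hcc]; exact OnePoint.coe_ne_infty ac
  refine ⟨hne, ?_, ?_, ?_, ?_, ?_⟩
  · intro t ht; rw [Y3 hg hx ht, Y3 hg hx le_rfl]
  · intro s t _ hs; exact absurd hs (hne s)
  · have h : xiSet (timeChange g x) = ∅ :=
      eq_empty_iff_forall_notMem.2 fun t ht => hne t ht
    rw [h]; exact isClosed_empty
  · intro t h0 _
    rcases lt_or_ge t (Atotal g x).toReal with h2 | h2
    · exact W1 hg hx h0 ((ENNReal.ofReal_lt_iff_lt_toReal h0 hAtne).2 h2)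
    · rw [hY2' t h0 h2]
      apply tendsto_const_on
      filter_upwards [self_mem_nhdsWithin] with s hs
      exact hY2' s (le_trans h0 (le_of_lt hs)) (le_trans h2 (le_of_lt hs))
  · intro t h0t _
    rcases lt_or_ge t (Atotal g x).toReal with h2 | h2
    · exact W2 hg hx h0t ((ENNReal.ofReal_lt_iff_lt_toReal h0t.le hAtne).2 h2)
    rcases eq_or_lt_of_le h2 with heq | hlt
    · obtain ⟨aL, hL⟩ := hLex (by rw [heq]; exact h0t)
      refine ⟨aL, ?_⟩
      rw [← heq]
      exact W3 hg hx hAtne (by rw [heq]; exact h0t) hL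
    · refine ⟨ac, ?_⟩
      apply tendsto_const_on
      have hmem : Ioo (max (Atotal g x).toReal 0) t ∈ 𝓝[<] t :=
        Ioo_mem_nhdsLT_of_mem ⟨max_lt hlt h0t, le_rfl⟩
      filter_upwards [hmem] with s hs
      rw [hY2' s (le_trans (le_max_right _ 0) hs.1.le)
        (le_trans (le_max_left _ 0) hs.1.le), hcc]

lemma pack_E (hg : Czero g) (hx : IsDexp x) (hAtne : Atotal g x ≠ ⊤)
    (hcc : cc g x = OnePoint.infty) (ht₀pos : 0 < (Atotal g x).toReal) :
    IsDexp (timeChange g x) ∧ xiSet (timeChange g x) = Ici (Atotal g x).toReal := by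
  have hY2' : ∀ t : ℝ, 0 ≤ t → (Atotal g x).toReal ≤ t → timeChange g x t = cc g x :=
    fun t h0 hge => Y2 hg hx h0 (le_ofReal_At hAtne h0 hge)
  have hAtne0 : Atotal g x ≠ 0 := by
    intro h
    rw [h] at ht₀pos
    simpa using ht₀pos
  have hx0 : x 0 ≠ OnePoint.infty := xs_ne (good_zero_of hAtne0)
  have hbefore : ∀ t, t < (Atotal g x).toReal → timeChange g x t ≠ OnePoint.infty := by
    intro t h
    rcases lt_or_ge t 0 with h1 | h1
    · rw [Y3 hg hx h1.le]; exact hx0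
    · obtain ⟨s, hs, -, hyt⟩ := Y1 hg hx h1 ((ENNReal.ofReal_lt_iff_lt_toReal h1 hAtne).2 h)
      rw [hyt]; exact xs_ne hs
  have hafter : ∀ t, (Atotal g x).toReal ≤ t → timeChange g x t = OnePoint.infty := by
    intro t h
    rw [hY2' t (le_trans ENNReal.toReal_nonneg h) h, hcc]
  have hxiSet : xiSet (timeChange g x) = Ici (Atotal g x).toReal := by
    ext t
    simp only [xiSet, mem_setOf_eq, mem_Ici]
    constructor
    · intro hmem
      by_contra hcon
      push_neg at hcon
      exact hbefore t hcon hmem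
    · exact hafter t
  refine ⟨⟨?_, ?_, ?_, ?_, ?_⟩, hxiSet⟩
  · intro t ht; rw [Y3 hg hx ht, Y3 hg hx le_rfl]
  · intro s t hst hs
    have h1 : (Atotal g x).toReal ≤ s := by
      by_contra hcon
      push_neg at hcon
      exact hbefore s hcon hs
    exact hafter t (le_trans h1 hst)
  · rw [hxiSet]; exact isClosed_Ici
  · intro t h0 hne
    have h2 : t < (Atotal g x).toReal := by
      by_contra hcon
      push_neg at hcon
      exact hne (hafter t hcon)
    exact W1 hg hx h0 ((ENNReal.ofReal_lt_iff_lt_toReal h0 hAtne).2 h2)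
  · intro t h0 hne
    have h2 : t < (Atotal g x).toReal := by
      by_contra hcon
      push_neg at hcon
      exact hne (hafter t hcon)
    exact W2 hg hx h0 ((ENNReal.ofReal_lt_iff_lt_toReal h0.le hAtne).2 h2)

lemma isDexp_cases (hg : Czero g) (hx : IsDexp x) :
    ((∀ t, timeChange g x t ≠ OnePoint.infty) ∧ IsDexp (timeChange g x)) ∨
    (Atotal g x ≠ ⊤ ∧ 0 < (Atotal g x).toReal ∧ cc g x = OnePoint.infty ∧
      IsDexp (timeChange g x) ∧
      xiSet (timeChange g x) = Ici (Atotal g x).toReal ∧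
      (∀ s, good g x s → timeChange g x ((Ag g x s).toReal) = x s) ∧
      (TT g x ≠ ⊤ → x ((TT g x).toReal) = OnePoint.infty)) ∨
    timeChange g x = deadPath S := by
  have hmap := hmap_gen hg hx
  rcases eq_or_ne (Atotal g x) ⊤ with hAtop | hAtne
  · left
    have hne : ∀ t, timeChange g x t ≠ OnePoint.infty := by
      intro t
      rcases le_or_gt 0 t with h0 | h0
      · obtain ⟨s, hs, -, hyt⟩ := Y1 hg hx h0 (by rw [hAtop]; exact ENNReal.ofReal_lt_top)
        rw [hyt]; exact xs_ne hs
      · rw [Y3 hg hx h0.le]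
        exact xs_ne (good_zero_of (by rw [hAtop]; exact ENNReal.top_ne_zero))
    refine ⟨hne, ?_, ?_, ?_, ?_, ?_⟩
    · intro t ht; rw [Y3 hg hx ht, Y3 hg hx le_rfl]
    · intro s t _ hs; exact absurd hs (hne s)
    · have h : xiSet (timeChange g x) = ∅ :=
        eq_empty_iff_forall_notMem.2 fun t ht => hne t ht
      rw [h]; exact isClosed_empty
    · intro t h0 _
      exact W1 hg hx h0 (by rw [hAtop]; exact ENNReal.ofReal_lt_top)
    · intro t h0 _
      exact W2 hg hx h0 (by rw [hAtop]; exact ENNReal.ofReal_lt_top)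
  · have hY2' : ∀ t : ℝ, 0 ≤ t → (Atotal g x).toReal ≤ t → timeChange g x t = cc g x :=
      fun t h0 hge => Y2 hg hx h0 (le_ofReal_At hAtne h0 hge)
    by_cases hB : ∃ a : S, g a = 0 ∧ Tendsto x (leftFilter (TT g x)) (𝓝 (a : OnePoint S))
    · obtain ⟨a, ha0, hten⟩ := hB
      have hcc : cc g x = (a : OnePoint S) := by
        unfold cc
        rw [dif_pos ⟨a, ha0, hten⟩]
        exact leftLimValE_eq hten
      exact Or.inl (pack_N hg hx hAtne hcc (fun _ => ⟨a, hten⟩))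
    · rcases eq_or_ne (TT g x) ⊤ with htT | htT
      · have hcc : cc g x = OnePoint.infty := by
          unfold cc
          rw [dif_neg hB, if_neg (by simp [htT])]
        rcases eq_or_lt_of_le (ENNReal.toReal_nonneg : (0:ℝ) ≤ (Atotal g x).toReal)
          with h00 | ht₀pos
        · exfalso
          have hAt0 : Atotal g x = 0 := by
            rw [← ENNReal.ofReal_toReal hAtne, ← h00]
            simp
          exact (Atotal_pos_TT hg hx hAt0).1 htT
        · obtain ⟨hdexp, hxiSet⟩ := pack_E hg hx hAtne hcc ht₀pos
          exact Or.inr (Or.inl ⟨hAtne, ht₀pos, hcc, hdexp, hxiSet, hmap,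
            fun h => (h htT).elim⟩)
      · have hcc : cc g x = x (TT g x).toReal := by
          unfold cc
          rw [dif_neg hB, if_pos htT]
        rcases eq_or_ne (x (TT g x).toReal) OnePoint.infty with hxTr | hxTr
        · rw [hxTr] at hcc
          rcases eq_or_lt_of_le (ENNReal.toReal_nonneg : (0:ℝ) ≤ (Atotal g x).toReal)
            with h00 | ht₀pos
          · refine Or.inr (Or.inr ?_)
            have hAt0 : Atotal g x = 0 := by
              rw [← ENNReal.ofReal_toReal hAtne, ← h00]
              simp
            obtain ⟨-, hTr0⟩ := Atotal_pos_TT hg hx hAt0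
            have hx0 : x 0 = OnePoint.infty := by rw [← hTr0]; exact hxTr
            funext t
            rcases le_or_gt t 0 with h | h
            · rw [Y3 hg hx h, hx0]; rfl
            · rw [hY2' t h.le (by rw [← h00]; exact h.le), hcc]; rfl
          · obtain ⟨hdexp, hxiSet⟩ := pack_E hg hx hAtne hcc ht₀pos
            exact Or.inr (Or.inl ⟨hAtne, ht₀pos, hcc, hdexp, hxiSet, hmap,
              fun _ => hxTr⟩)
        · obtain ⟨ac, hac⟩ : ∃ ac : S, x (TT g x).toReal = (ac : OnePoint S) := by
            rcases h : x (TT g x).toReal with _ | b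
            · exact absurd h hxTr
            · exact ⟨b, rfl⟩
          have hcc' : cc g x = (ac : OnePoint S) := by rw [hcc, hac]
          refine Or.inl (pack_N hg hx hAtne hcc' ?_)
          intro ht₀pos
          have hTrpos : 0 < (TT g x).toReal := by
            rcases eq_or_lt_of_le (ENNReal.toReal_nonneg : (0:ℝ) ≤ (TT g x).toReal)
              with h00 | h
            · exfalso
              have hAt0 : Atotal g x = 0 := by
                rw [← Ag_toReal_eq_Atotal htT, ← h00, Ag_zero]
              rw [hAt0] at ht₀pos
              simpa using ht₀pos
            · exact h
          obtain ⟨aL, hL⟩ := hx.2.2.2.2 (TT g x).toReal hTrpos hxTr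
          refine ⟨aL, ?_⟩
          rw [show leftFilter (TT g x) = 𝓝[<] (TT g x).toReal by
            unfold leftFilter; rw [if_neg htT]]
          exact hL

lemma Atotal_top_of_bdd (hg : Czero g) (hx : IsDexp x) (htT : TT g x = ⊤) {C : ℝ}
    (hCb : ∀ u : ℝ, 0 ≤ u → gOP g (x u) ≤ C) : Atotal g x = ⊤ := by
  have hgood : ∀ u : ℝ, 0 ≤ u → good g x u := fun u hu =>
    ⟨hu, by rw [htT]; exact ENNReal.ofReal_lt_top⟩
  have hC0 : 0 < C := lt_of_lt_of_le (gOP_pos hg (hgood 0 le_rfl)) (hCb 0 le_rfl)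
  by_contra hAtne
  obtain ⟨n, hn⟩ := exists_nat_gt ((Atotal g x).toReal * C)
  have hAg : ENNReal.ofReal ((n:ℝ) / C) ≤ Ag g x n := by
    have hgoodn := hgood n (Nat.cast_nonneg n)
    rw [Ag_eq (Nat.cast_nonneg n) hgoodn.2.le]
    have hptw : ∀ᵐ u ∂(volume.restrict (Ioo (0:ℝ) n)),
        ENNReal.ofReal (1 / C) ≤ ff g x u := by
      rw [ae_restrict_iff' measurableSet_Ioo]
      refine ae_of_all _ fun u hu => ?_
      have h1 : ENNReal.ofReal (gOP g (x u)) ≤ ENNReal.ofReal C :=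
        ENNReal.ofReal_le_ofReal (hCb u hu.1.le)
      have h2 : (ENNReal.ofReal C)⁻¹ ≤ ff g x u := ENNReal.inv_le_inv' h1
      calc ENNReal.ofReal (1/C) = (ENNReal.ofReal C)⁻¹ := by
            rw [one_div, ENNReal.ofReal_inv_of_pos hC0]
        _ ≤ ff g x u := h2
    calc ENNReal.ofReal ((n:ℝ)/C) = ENNReal.ofReal (1/C) * ENNReal.ofReal n := by
          rw [← ENNReal.ofReal_mul (by positivity)]
          congr 1
          ring
      _ = ENNReal.ofReal (1/C) * volume (Ioo (0:ℝ) n) := by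
          rw [Real.volume_Ioo, sub_zero]
      _ = ∫⁻ _ in Ioo (0:ℝ) n, ENNReal.ofReal (1/C) := (setLIntegral_const _ _).symm
      _ ≤ ∫⁻ u in Ioo (0:ℝ) n, ff g x u := lintegral_mono_ae hptw
  have hle : Ag g x n ≤ Atotal g x :=
    Ag_le_Atotal (Nat.cast_nonneg n) (hgood n (Nat.cast_nonneg n)).2.le
  have hlt : Atotal g x < ENNReal.ofReal ((n:ℝ)/C) := by
    rw [ENNReal.lt_ofReal_iff_toReal_lt hAtne, lt_div_iff₀ hC0]
    exact hn
  exact absurd (le_trans hAg hle) (not_le.2 hlt)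

lemma main_loc (hgl : CzeroLocBdd g) (hxl : IsDloc x) : IsDloc (timeChange g x) := by
  obtain ⟨hg, hloc⟩ := hgl
  have hx := hxl.1
  rcases isDexp_cases hg hx with ⟨hne, hdexp⟩ |
    ⟨hAtne, ht₀, hcc, hdexp, hxiSet, hmap, hTr⟩ | hdead
  · refine ⟨hdexp, ?_⟩
    rintro ⟨⟨t, htm⟩, -⟩
    exact absurd htm (hne t)
  · refine ⟨hdexp, ?_⟩
    rintro ⟨-, hxiRpos, hcomp⟩
    have hxiR' : xiR (timeChange g x) = (Atotal g x).toReal := by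
      unfold xiR
      rw [hxiSet]
      exact csInf_Ici
    rw [hxiR']
    have hrange : ∀ s, good g x s → ∀ a : S, x s = (a : OnePoint S) →
        a ∈ pathRange (timeChange g x) := by
      intro s hs a hxa
      exact ⟨(Ag g x s).toReal, ENNReal.toReal_nonneg, by rw [hmap s hs]; exact hxa⟩
    rcases eq_or_ne (TT g x) ⊤ with htT | htT
    · exfalso
      obtain ⟨C, hC⟩ := hloc _ hcomp
      have hCb : ∀ u : ℝ, 0 ≤ u → gOP g (x u) ≤ C := by
        intro u hu
        have hgoodu : good g x u := ⟨hu, by rw [htT]; exact ENNReal.ofReal_lt_top⟩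
        obtain ⟨a, ha, hxa⟩ := good_spec hgoodu
        rw [hxa, gOP_coe]
        exact hC a (subset_closure (hrange u hgoodu a hxa))
      exact hAtne (Atotal_top_of_bdd hg hx htT hCb)
    · have hTrinf := hTr htT
      have hTrpos : 0 < (TT g x).toReal := by
        rcases eq_or_lt_of_le (ENNReal.toReal_nonneg : (0:ℝ) ≤ (TT g x).toReal)
          with h00 | h
        · exfalso
          have hz : Atotal g x = 0 := by
            rw [← Ag_toReal_eq_Atotal htT, ← h00, Ag_zero]
          rw [hz] at ht₀
          simpa using ht₀
        · exact h
      have hgoodlt : ∀ s : ℝ, 0 ≤ s → s < (TT g x).toReal → good g x s := fun s h0 hlt =>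
        ⟨h0, (ENNReal.ofReal_lt_iff_lt_toReal h0 htT).2 hlt⟩
      have hxiSetx : xiSet x = Ici (TT g x).toReal := by
        ext s
        simp only [xiSet, mem_setOf_eq, mem_Ici]
        constructor
        · intro hs
          by_contra hcon
          push_neg at hcon
          rcases lt_or_ge s 0 with h1 | h1
          · rw [hx.1 s h1.le] at hs
            exact xs_ne (hgoodlt 0 le_rfl hTrpos) hs
          · exact xs_ne (hgoodlt s h1 hcon) hs
        · intro hs
          exact hx.2.1 hs hTrinf
      have hxiRx : xiR x = (TT g x).toReal := by
        unfold xiR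
        rw [hxiSetx]
        exact csInf_Ici
      have hcompx : IsCompact (closure (pathRange x)) := by
        refine hcomp.of_isClosed_subset isClosed_closure (closure_mono ?_)
        rintro a ⟨s, hs0, hxa⟩
        have hslt : s < (TT g x).toReal := by
          by_contra hcon
          push_neg at hcon
          rw [hx.2.1 hcon hTrinf] at hxa
          exact OnePoint.coe_ne_infty a hxa.symm
        exact hrange s (hgoodlt s hs0 hslt) a hxa
      obtain ⟨a, hax⟩ := hxl.2
        ⟨⟨(TT g x).toReal, hTrinf⟩, by rw [hxiRx]; exact hTrpos, hcompx⟩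
      rw [hxiRx] at hax
      refine ⟨a, W3 hg hx hAtne ht₀ ?_⟩
      rw [show leftFilter (TT g x) = 𝓝[<] (TT g x).toReal by
        unfold leftFilter; rw [if_neg htT]]
      exact hax
  · rw [hdead]
    exact isDloc_deadPath

lemma main_glob (hg : Czero g) (hbd : ∃ C : ℝ, ∀ a : S, g a ≤ C) (hxg : IsDglob x) :
    IsDglob (timeChange g x) := by
  obtain ⟨C, hC⟩ := hbd
  have hx := hxg.1
  rcases isDexp_cases hg hx with ⟨hne, hdexp⟩ |
    ⟨hAtne, ht₀, hcc, hdexp, hxiSet, hmap, hTr⟩ | hdead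
  · exact ⟨hdexp, hne⟩
  · exfalso
    rcases eq_or_ne (TT g x) ⊤ with htT | htT
    · have hCb : ∀ u : ℝ, 0 ≤ u → gOP g (x u) ≤ C := by
        intro u hu
        have hgoodu : good g x u := ⟨hu, by rw [htT]; exact ENNReal.ofReal_lt_top⟩
        obtain ⟨a, -, hxa⟩ := good_spec hgoodu
        rw [hxa, gOP_coe]
        exact hC a
      exact hAtne (Atotal_top_of_bdd hg hx htT hCb)
    · exact hxg.2 _ (hTr htT)
  · exfalso
    have h0 : timeChange g x 0 = x 0 := Y3 hg hx le_rfl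
    rw [hdead] at h0
    exact hxg.2 0 h0.symm

end TimeChangeProof
/-- Proposition 3.2, 3. and 4.. (i) If `g ∈ C^{≠0}(S,ℝ₊)` is bounded and
`x ∈ 𝔻(S)`, then `g·x ∈ 𝔻(S)`.  (ii) If `g ∈ C̃^{≠0}(S,ℝ₊)` and `x ∈ 𝔻_loc(S)`, then
`g·x ∈ 𝔻_loc(S)`. -/
theorem timeChange_mem
    {S : Type*} [MetricSpace S] [SecondCountableTopology S] [LocallyCompactSpace S] :
    (∀ g : S → ℝ, Czero g → (∃ C : ℝ, ∀ a : S, g a ≤ C) →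
      ∀ x : Path S, IsDglob x → IsDglob (timeChange g x)) ∧
    (∀ g : S → ℝ, CzeroLocBdd g →
      ∀ x : Path S, IsDloc x → IsDloc (timeChange g x)) := by
  constructor
  · intro g hg hbd x hx
    exact main_glob hg hbd hx
  · intro g hgl x hx
    exact main_loc hgl hx

end LocSkor
end
end
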